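/- arXiv:1102.2789 — 8 statements merged into one kernel-verified Lean document; each statement's English description precedes it below -/
import Mathlib

section
/- Let K be a field and f1,…,fm ∈ K[x1,…,xn] be such that exactly m−1 of them are algebraically independent (i.e., the transcendence degree of {f1,…,fm} equals m−1). Then the ideal I ⊆ K[y1,…,ym] of all algebraic relations among f1,…,fm (the kernel of the evaluation map yi ↦ fi) is a principal ideal. -/
open MvPolynomial

noncomputable def trdeg (K : Type*) {A : Type*} [CommRing K] [CommRing A] [Algebra K A]
    {m : ℕ} (f : Fin m → A) : ℕ :=
  sSup {r | ∃ s : Finset (Fin m), s.card = r ∧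
    AlgebraicIndependent K (fun i : ↥s => f i.1)}

open Polynomial

private theorem lemA {A : Type*} [CommRing A] [IsDomain A] [NormalizedGCDMonoid A]
    (Q : Ideal (Polynomial A)) (hQ : Q.IsPrime) (hne : Q ≠ ⊥)
    (hc : ∀ a : A, Polynomial.C a ∈ Q → a = 0) : Q.IsPrincipal := by
  classical
  let F := FractionRing A
  have hinj : Function.Injective (algebraMap A F) := IsFractionRing.injective A F
  have hM : Function.Injective (Polynomial.map (algebraMap A F)) :=
    Polynomial.map_injective _ hinj
  -- minimal degree nonzero element
  have hS : ∃ d, ∃ q ∈ Q, q ≠ 0 ∧ q.natDegree = d := by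
    obtain ⟨q, hq, hq0⟩ := Submodule.exists_mem_ne_zero_of_ne_bot hne
    exact ⟨q.natDegree, q, hq, hq0, rfl⟩
  obtain ⟨q, hqQ, hq0, hqd⟩ := Nat.sInf_mem hS
  have hmin : ∀ r ∈ Q, r ≠ 0 → q.natDegree ≤ r.natDegree := by
    intro r hr hr0
    rw [hqd]
    exact Nat.sInf_le ⟨r, hr, hr0, rfl⟩
  set p := q.primPart with hp
  have hpQ : p ∈ Q := by
    have := q.eq_C_content_mul_primPart
    rcases hQ.mem_or_mem (this ▸ hqQ) with h | h
    · exact absurd (hc _ h) (by simpa [Polynomial.content_eq_zero_iff] using hq0)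
    · exact h
  have hp0 : p ≠ 0 := q.primPart_ne_zero
  have hpd : p.natDegree = q.natDegree := q.natDegree_primPart
  have hprim : p.IsPrimitive := q.isPrimitive_primPart
  -- natDegree p ≥ 1
  have hdeg1 : 1 ≤ p.natDegree := by
    by_contra hlt
    push_neg at hlt
    interval_cases h : p.natDegree
    · obtain ⟨a, ha⟩ := Polynomial.natDegree_eq_zero.mp h
      rw [← ha] at hpQ hp0
      exact hp0 (by rw [hc a hpQ, map_zero])
  refine ⟨⟨p, le_antisymm ?_ ?_⟩⟩
  swap
  · show Ideal.span {p} ≤ Q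
    rwa [Ideal.span_le, Set.singleton_subset_iff]
  intro r hr
  rcases eq_or_ne r 0 with rfl | hr0
  · exact Ideal.zero_mem _
  -- show map p ∣ map r in F[X]
  have hdvd : p.map (algebraMap A F) ∣ r.map (algebraMap A F) := by
    set P' := p.map (algebraMap A F) with hP'
    have hP'0 : P' ≠ 0 := by
      simpa [hP', Polynomial.map_eq_zero_iff hinj] using hp0
    have hP'deg : P'.natDegree = p.natDegree :=
      Polynomial.natDegree_map_eq_of_injective hinj p
    set c := P'.leadingCoeff with hcdef
    have hc0 : c ≠ 0 := Polynomial.leadingCoeff_ne_zero.mpr hP'0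
    set p' := P' * Polynomial.C c⁻¹ with hp'def
    have hp'monic : p'.Monic := Polynomial.monic_mul_leadingCoeff_inv hP'0
    set r' := r.map (algebraMap A F) with hr'def
    set t := r' %ₘ p' with ht
    set s := r' /ₘ p' with hsdef
    have hdiv : r' = p' * s + t := by
      rw [ht, hsdef, add_comm]; exact (Polynomial.modByMonic_add_div r' p').symm
    have htdeg : t.degree < p'.degree := Polynomial.degree_modByMonic_lt r' hp'monic
    -- t = 0
    have ht0 : t = 0 := by
      by_contra ht0
      -- clear denominators of (C c⁻¹ * s)
      obtain ⟨b, hb⟩ := IsLocalization.integerNormalization_map_to_map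
        (nonZeroDivisors A) (Polynomial.C c⁻¹ * s)
      set sA := IsLocalization.integerNormalization (nonZeroDivisors A) (Polynomial.C c⁻¹ * s)
      have hb0 : (b : A) ≠ 0 := nonZeroDivisors.coe_ne_zero b
      set tA := Polynomial.C (b : A) * r - p * sA with htA
      have htAQ : tA ∈ Q := Q.sub_mem (Ideal.mul_mem_left _ _ hr) (Ideal.mul_mem_right _ _ hpQ)
      have hsmul : ((b : A) • (Polynomial.C c⁻¹ * s) : Polynomial F)
          = Polynomial.C (algebraMap A F b) * (Polynomial.C c⁻¹ * s) := by
        rw [← algebraMap_smul F (b : A) (Polynomial.C c⁻¹ * s), Polynomial.smul_eq_C_mul]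
      have hmap : tA.map (algebraMap A F) = Polynomial.C (algebraMap A F b) * t := by
        rw [htA, Polynomial.map_sub, Polynomial.map_mul, Polynomial.map_mul, hb, hsmul,
          Polynomial.map_C]
        have hps : P' * (Polynomial.C (algebraMap A F b) * (Polynomial.C c⁻¹ * s))
            = Polynomial.C (algebraMap A F b) * (p' * s) := by rw [hp'def]; ring
        rw [hps, ← mul_sub]
        congr 1
        rw [← hr'def, hdiv]; ring
      have hbF0 : (algebraMap A F) b ≠ 0 := fun hh => hb0 (hinj (by rw [hh, map_zero]))
      have htA0 : tA ≠ 0 := by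
        intro hh
        apply ht0
        have := hmap
        rw [hh, Polynomial.map_zero] at this
        rcases mul_eq_zero.mp this.symm with h | h
        · exact absurd (by simpa using h) hbF0
        · exact h
      have hdegtA : tA.natDegree < q.natDegree := by
        have h1 : tA.natDegree = (Polynomial.C (algebraMap A F b) * t).natDegree := by
          rw [← hmap, Polynomial.natDegree_map_eq_of_injective hinj]
        have h2 : (Polynomial.C (algebraMap A F b) * t).natDegree = t.natDegree :=
          Polynomial.natDegree_C_mul hbF0
        have h3 : t.natDegree < p'.natDegree := by
          apply Polynomial.natDegree_lt_natDegree ht0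
          exact htdeg
        have h4 : p'.natDegree = q.natDegree := by
          rw [hp'def, Polynomial.natDegree_mul_C (inv_ne_zero hc0), hP'deg, hpd]
        omega
      exact absurd (hmin _ htAQ htA0) (by omega)
    rw [ht0, add_zero] at hdiv
    exact ⟨Polynomial.C c⁻¹ * s, by rw [hdiv, hp'def]; ring⟩
  -- Gauss: p ∣ r
  have hpr : p ∣ r := by
    have hrp : p.map (algebraMap A F) ∣ (r.primPart).map (algebraMap A F) := by
      have := hdvd
      conv at this => rw [r.eq_C_content_mul_primPart]
      rw [Polynomial.map_mul] at this
      have hcontent : IsUnit ((Polynomial.C r.content).map (algebraMap A F)) := by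
        rw [Polynomial.map_C]
        refine Polynomial.isUnit_C.mpr (isUnit_iff_ne_zero.mpr ?_)
        intro hh
        apply hr0
        rw [← Polynomial.content_eq_zero_iff]
        apply hinj
        rw [map_zero, hh]
      exact (hcontent.dvd_mul_left).mp this
    have := (hprim.dvd_iff_fraction_map_dvd_fraction_map F (q := r.primPart)).mpr hrp
    exact this.trans r.primPart_dvd
  exact Ideal.mem_span_singleton.mpr hpr

theorem comap_principal_of_equiv {R S : Type*} [CommRing R] [CommRing S] (ε : R ≃+* S)
    (I : Ideal S) (hI : I.IsPrincipal) : (I.comap (ε : R →+* S)).IsPrincipal := by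
  obtain ⟨a, ha⟩ := hI
  refine ⟨⟨ε.symm a, ?_⟩⟩
  ext x
  rw [Ideal.mem_comap, ha]
  change ε x ∈ Ideal.span {a} ↔ x ∈ Ideal.span {ε.symm a}
  rw [Ideal.mem_span_singleton, Ideal.mem_span_singleton]
  constructor
  · intro hd
    have := map_dvd ε.symm hd
    simpa using this
  · intro hd
    have := map_dvd ε hd
    simpa using this

set_option maxHeartbeats 1000000 in
theorem relation_ideal_principal (K : Type*) [Field K] (n m : ℕ) (hm : 1 ≤ m)
    (f : Fin m → MvPolynomial (Fin n) K) (h : trdeg K f = m - 1) :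
    (RingHom.ker (MvPolynomial.aeval (R := K) f)).IsPrincipal := by
  classical
  obtain ⟨k, rfl⟩ : ∃ k, m = k + 1 := ⟨m - 1, (Nat.succ_pred_eq_of_pos hm).symm⟩
  set S := {r | ∃ s : Finset (Fin (k + 1)), s.card = r ∧
    AlgebraicIndependent K (fun i : ↥s => f i.1)} with hSdef
  have hbdd : BddAbove S := by
    refine ⟨k + 1, fun r hr => ?_⟩
    obtain ⟨s, hs, -⟩ := hr
    rw [← hs]
    simpa using s.card_le_univ
  have hSne : S.Nonempty := by
    refine ⟨0, ∅, Finset.card_empty, ?_⟩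
    haveI : IsEmpty (↥(∅ : Finset (Fin (k + 1)))) := by
      simp [Finset.isEmpty_coe_sort]; exact ⟨fun x => x.2⟩
    rw [algebraicIndependent_empty_type_iff]
    exact (algebraMap K (MvPolynomial (Fin n) K)).injective
  have hSup : sSup S = k := by
    unfold trdeg at h
    rw [Nat.add_sub_cancel] at h
    rw [hSdef]
    exact h
  have hks : k ∈ S := by
    have hmem := Nat.sSup_mem hSne hbdd
    rwa [hSup] at hmem
  obtain ⟨s, hscard, hsind⟩ := hks
  have hnotind : ¬ AlgebraicIndependent K f := by
    intro hf
    have hmem : (k + 1 : ℕ) ∈ S := by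
      refine ⟨Finset.univ, by simp, ?_⟩
      have h2 := hf.comp (fun i : ↥(Finset.univ : Finset (Fin (k+1))) => i.1)
        Subtype.val_injective
      simpa [Function.comp_def] using h2
    have := le_csSup hbdd hmem
    omega
  -- the missing index
  have hjex : ∃ j, j ∉ s := by
    by_contra hall
    push_neg at hall
    have : s = Finset.univ := Finset.eq_univ_iff_forall.mpr hall
    rw [this, Finset.card_univ, Fintype.card_fin] at hscard
    omega
  obtain ⟨j, hj⟩ := hjex
  have hcompl : ∀ x : Fin (k + 1), x ≠ j → x ∈ s := by
    have hcc : sᶜ.card = 1 := by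
      rw [Finset.card_compl, hscard]
      simp
    obtain ⟨a, ha⟩ := Finset.card_eq_one.mp hcc
    have haj : a = j := by
      have : j ∈ sᶜ := Finset.mem_compl.mpr hj
      rw [ha] at this
      exact (Finset.mem_singleton.mp this).symm
    intro x hx
    by_contra hxs
    have : x ∈ sᶜ := Finset.mem_compl.mpr hxs
    rw [ha, Finset.mem_singleton, haj] at this
    exact hx this
  set e := Equiv.swap (0 : Fin (k + 1)) j with he
  set g : Fin (k + 1) → MvPolynomial (Fin n) K := f ∘ e with hg
  -- g ∘ succ is algebraically independent
  have hgind : AlgebraicIndependent K (fun i : Fin k => g i.succ) := by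
    have hmemι : ∀ i : Fin k, e i.succ ∈ s := by
      intro i
      apply hcompl
      intro hh
      have : i.succ = (0 : Fin (k + 1)) := by
        rw [← Equiv.swap_apply_left (0 : Fin (k+1)) j] at hh
        exact e.injective hh
      exact Fin.succ_ne_zero i this
    set ι : Fin k → ↥s := fun i => ⟨e i.succ, hmemι i⟩ with hι
    have hιinj : Function.Injective ι := by
      intro a b hab
      have : e a.succ = e b.succ := congrArg Subtype.val hab
      exact Fin.succ_injective _ (e.injective this)
    have h2 := hsind.comp ι hιinj
    simpa [Function.comp_def, hι, hg] using h2
  have hnotindg : RingHom.ker (MvPolynomial.aeval (R := K) g) ≠ ⊥ := by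
    intro hbot
    apply hnotind
    have hginj : Function.Injective (MvPolynomial.aeval (R := K) g) :=
      (RingHom.injective_iff_ker_eq_bot _).mpr hbot
    have hgind' : AlgebraicIndependent K g := hginj
    have h2 := hgind'.comp e.symm e.symm.injective
    have hfe : (g ∘ e.symm) = f := by
      funext x
      simp [hg]
    rw [← hfe]
    simpa [Function.comp] using h2
  -- set up the polynomial ring over A
  letI : NormalizationMonoid (MvPolynomial (Fin k) K) :=
    @StrongNormalizationMonoid.toNormalizationMonoid _ _ UniqueFactorizationMonoid.normalizationMonoid
  letI : NormalizedGCDMonoid (MvPolynomial (Fin k) K) :=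
    UniqueFactorizationMonoid.toNormalizedGCDMonoid _
  set φ := MvPolynomial.finSuccEquiv K k with hφ
  set ψ : Polynomial (MvPolynomial (Fin k) K) →ₐ[K] MvPolynomial (Fin n) K :=
    (MvPolynomial.aeval (R := K) g).comp φ.symm.toAlgHom with hψ
  set Q := RingHom.ker ψ with hQdef
  have hψφ : ∀ x, ψ (φ x) = MvPolynomial.aeval (R := K) g x := by
    intro x
    simp [hψ]
  have hQprime : Q.IsPrime := RingHom.ker_isPrime _
  have hQne : Q ≠ ⊥ := by
    intro hbot
    apply hnotindg
    have hψinj : Function.Injective ψ := (RingHom.injective_iff_ker_eq_bot _).mpr hbot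
    rw [← RingHom.injective_iff_ker_eq_bot]
    intro a b hab
    apply φ.injective
    apply hψinj
    rw [hψφ, hψφ]
    exact hab
  have hφsucc : ∀ a : MvPolynomial (Fin k) K,
      φ (MvPolynomial.rename Fin.succ a) = Polynomial.C a := by
    intro a
    induction a using MvPolynomial.induction_on with
    | C r =>
      rw [MvPolynomial.rename_C]
      simp [hφ, MvPolynomial.finSuccEquiv_apply]
    | add p q hp hq => rw [map_add, map_add, hp, hq, map_add]
    | mul_X p i hp =>
      rw [map_mul, map_mul, hp, MvPolynomial.rename_X, MvPolynomial.finSuccEquiv_X_succ, map_mul]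
  have hCker : ∀ a : MvPolynomial (Fin k) K, Polynomial.C a ∈ Q → a = 0 := by
    intro a ha
    have h1 : ψ (Polynomial.C a) = 0 := ha
    rw [← hφsucc a, hψφ, MvPolynomial.aeval_rename] at h1
    have h2 : MvPolynomial.aeval (R := K) (fun i : Fin k => g i.succ) a = 0 := h1
    have h3 : MvPolynomial.aeval (R := K) (fun i : Fin k => g i.succ) a
        = MvPolynomial.aeval (R := K) (fun i : Fin k => g i.succ) 0 := by
      rw [map_zero, h2]
    exact hgind h3
  have hQprin : Q.IsPrincipal := lemA Q hQprime hQne hCker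
  -- transfer back along φ
  have hkerg : RingHom.ker (MvPolynomial.aeval (R := K) g) =
      Ideal.comap (φ : MvPolynomial (Fin (k+1)) K ≃+* Polynomial (MvPolynomial (Fin k) K)) Q := by
    ext x
    rw [Ideal.mem_comap]
    change MvPolynomial.aeval (R := K) g x = 0 ↔ ψ (φ x) = 0
    rw [hψφ]
  have hkergp : (RingHom.ker (MvPolynomial.aeval (R := K) g)).IsPrincipal := by
    rw [hkerg]
    exact comap_principal_of_equiv _ Q hQprin
  -- transfer along the rename equivalence
  have hkerf : RingHom.ker (MvPolynomial.aeval (R := K) f) =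
      Ideal.comap ((MvPolynomial.renameEquiv K e.symm :
        MvPolynomial (Fin (k+1)) K ≃ₐ[K] MvPolynomial (Fin (k+1)) K) :
        MvPolynomial (Fin (k+1)) K ≃+* MvPolynomial (Fin (k+1)) K)
        (RingHom.ker (MvPolynomial.aeval (R := K) g)) := by
    ext x
    rw [Ideal.mem_comap]
    change MvPolynomial.aeval (R := K) f x = 0 ↔
      MvPolynomial.aeval (R := K) g (MvPolynomial.rename e.symm x) = 0
    rw [MvPolynomial.aeval_rename]
    have : g ∘ e.symm = f := by funext y; simp [hg]
    rw [this]
  rw [hkerf]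
  exact comap_principal_of_equiv _ _ hkergp
end

section
/- Let K be a field, f1,…,fm ∈ K[x1,…,xn], A = K[f1,…,fm] the subalgebra they generate, and φ: K[x1,…,xn] → K[z1,…,zr] a K-algebra homomorphism. Then trdeg{φ(f1),…,φ(fm)} = trdeg{f1,…,fm} if and only if the restriction φ|A: A → K[z1,…,zr] is injective. -/
open MvPolynomial

section aux

variable {K A : Type*} [Field K] [CommRing A] [Algebra K A] {m : ℕ}

lemma trdeg_bddAbove (f : Fin m → A) :
    BddAbove {r | ∃ s : Finset (Fin m), s.card = r ∧
      AlgebraicIndependent K (fun i : ↥s => f i.1)} := by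
  refine ⟨m, ?_⟩
  rintro r ⟨t, rfl, -⟩
  simpa using Finset.card_le_univ t

lemma card_le_trdeg {f : Fin m → A} {s : Finset (Fin m)}
    (hs : AlgebraicIndependent K (fun i : ↥s => f i.1)) : s.card ≤ trdeg K f :=
  le_csSup (trdeg_bddAbove f) ⟨s, rfl, hs⟩

lemma exists_trdeg [Nontrivial A] (f : Fin m → A) :
    ∃ s : Finset (Fin m), s.card = trdeg K f ∧
      AlgebraicIndependent K (fun i : ↥s => f i.1) := by
  have h0 : (0 : ℕ) ∈ {r | ∃ s : Finset (Fin m), s.card = r ∧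
      AlgebraicIndependent K (fun i : ↥s => f i.1)} := by
    refine ⟨∅, by simp, ?_⟩
    haveI : IsEmpty ↥((∅ : Finset (Fin m))) := by
      simp [Finset.isEmpty_coe_sort]
      exact ⟨fun x => x.2⟩
    exact algebraicIndependent_empty_type
  obtain ⟨s, h1, h2⟩ := Nat.sSup_mem ⟨0, h0⟩ (trdeg_bddAbove f)
  exact ⟨s, h1, h2⟩

lemma insert_indep {F : Type*} [CommRing F] [Algebra K F] {g : Fin m → F} {s : Finset (Fin m)}
    {j : Fin m} (hj : j ∉ s)
    (h : AlgebraicIndependent K fun o : Option ↥s => o.elim (g j) (fun i => g i.1)) :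
    AlgebraicIndependent K fun i : ↥(insert j s) => g i.1 := by
  classical
  have h2 := h.comp
    (fun i : ↥(insert j s) => if hi : i.1 ∈ s then some (⟨i.1, hi⟩ : ↥s) else none) ?_
  · convert h2 using 1
    funext i
    by_cases hi : i.1 ∈ s
    · simp [hi, Function.comp]
    · have hij : i.1 = j := by
        rcases Finset.mem_insert.1 i.2 with h' | h'
        · exact h'
        · exact absurd h' hi
      simp [hi, Function.comp, hij, hj]
  · rintro ⟨i, hi⟩ ⟨i', hi'⟩ hee
    rw [Finset.mem_insert] at hi hi'
    by_cases h1 : i ∈ s <;> by_cases h2 : i' ∈ s <;>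
      simp only [h1, h2, dif_pos, dif_neg, not_false_iff, Option.some.injEq] at hee <;>
      simp_all [Subtype.ext_iff]

lemma IsAlgebraic.toIntermediateField {K F : Type*} [Field K] [Field F] [Algebra K F]
    {L : IntermediateField K F} {x : F} (h : IsAlgebraic (↥L.toSubalgebra) x) :
    IsAlgebraic (↥L) x := by
  obtain ⟨p, hp0, hpe⟩ := h
  let e : ↥L.toSubalgebra →+* ↥L :=
    RingHom.codRestrict (algebraMap (↥L.toSubalgebra) F) L (fun z => z.2)
  have he : Function.Injective e := fun z1 z2 hz => Subtype.ext (congrArg Subtype.val hz)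
  refine ⟨p.map e, (Polynomial.map_ne_zero_iff he).2 hp0, ?_⟩
  rw [Polynomial.aeval_def, Polynomial.eval₂_map]
  have hcomp : (algebraMap (↥L) F).comp e = algebraMap (↥L.toSubalgebra) F :=
    RingHom.ext fun z => rfl
  rw [hcomp]
  rw [Polynomial.aeval_def] at hpe
  exact hpe

lemma exists_good {K R : Type*} [CommRing K] [CommRing R] [IsDomain R] [Algebra K R]
    (S : Subalgebra K R) {c : R} (hc : c ≠ 0) :
    ∀ P : Polynomial R, P ≠ 0 → (∀ k, P.coeff k ∈ S) → Polynomial.eval c P = 0 →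
      ∃ Q : Polynomial R, (∀ k, Q.coeff k ∈ S) ∧ Polynomial.eval c Q = 0 ∧ Q.coeff 0 ≠ 0 := by
  suffices H : ∀ N, ∀ P : Polynomial R, P.natDegree ≤ N → P ≠ 0 →
      (∀ k, P.coeff k ∈ S) → Polynomial.eval c P = 0 →
      ∃ Q : Polynomial R, (∀ k, Q.coeff k ∈ S) ∧ Polynomial.eval c Q = 0 ∧ Q.coeff 0 ≠ 0 by
    exact fun P h1 h2 h3 => H P.natDegree P le_rfl h1 h2 h3
  intro N
  induction N with
  | zero =>
    intro P hd h0 hS he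
    exfalso
    apply h0
    rw [Polynomial.eq_C_of_natDegree_le_zero hd] at he ⊢
    rw [Polynomial.eval_C] at he
    rw [he, map_zero]
  | succ N ih =>
    intro P hd h0 hS he
    by_cases hc0 : P.coeff 0 = 0
    · have hdiv : P = Polynomial.X * P.divX := by
        conv_lhs => rw [← Polynomial.X_mul_divX_add P]
        rw [hc0, map_zero, add_zero]
      have hPd : P.divX ≠ 0 := by
        intro h; apply h0; rw [hdiv, h, mul_zero]
      have hev : Polynomial.eval c P.divX = 0 := by
        rw [hdiv, Polynomial.eval_mul, Polynomial.eval_X] at he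
        rcases mul_eq_zero.1 he with h | h
        · exact absurd h hc
        · exact h
      refine ih P.divX ?_ hPd (fun k => by rw [Polynomial.coeff_divX]; exact hS _) hev
      have h1 := Polynomial.natDegree_divX_eq_natDegree_tsub_one (p := P)
      omega
    · exact ⟨P, hS, he, hc0⟩

end aux

set_option maxHeartbeats 2000000 in
set_option synthInstance.maxHeartbeats 400000 in
theorem faithful_iff_injective (K : Type*) [Field K] (n m r : ℕ)
    (f : Fin m → MvPolynomial (Fin n) K)
    (φ : MvPolynomial (Fin n) K →ₐ[K] MvPolynomial (Fin r) K) :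
    trdeg K (fun i => φ (f i)) = trdeg K f ↔
      Set.InjOn φ (Algebra.adjoin K (Set.range f) : Subalgebra K (MvPolynomial (Fin n) K)) := by
  classical
  constructor
  · intro htr
    intro a ha b hb hab
    have hc_mem : a - b ∈ Algebra.adjoin K (Set.range f) := sub_mem ha hb
    have hc0 : φ (a - b) = 0 := by rw [map_sub, hab, sub_self]
    rw [← sub_eq_zero]
    set c := a - b with hcdef
    by_contra hne
    -- setup
    set F := FractionRing (MvPolynomial (Fin n) K) with hF
    let ι : MvPolynomial (Fin n) K →ₐ[K] F := IsScalarTower.toAlgHom K _ F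
    have hιinj : Function.Injective ι := IsFractionRing.injective (MvPolynomial (Fin n) K) F
    obtain ⟨s, hcard, hφind⟩ := exists_trdeg (K := K) (fun i => φ (f i))
    have hfind : AlgebraicIndependent K (fun i : ↥s => f i.1) :=
      AlgebraicIndependent.of_comp φ hφind
    set g : Fin m → F := fun i => ι (f i) with hgdef
    have hgind : AlgebraicIndependent K (fun i : ↥s => g i.1) := hfind.map' (f := ι) hιinj
    have hbound : ∀ t : Finset (Fin m),
        AlgebraicIndependent K (fun i : ↥t => g i.1) → t.card ≤ s.card := by
      intro t ht
      have h1 : AlgebraicIndependent K (fun i : ↥t => f i.1) :=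
        AlgebraicIndependent.of_comp ι ht
      calc t.card ≤ trdeg K f := card_le_trdeg h1
        _ = trdeg K (fun i => φ (f i)) := htr.symm
        _ = s.card := hcard.symm
    have halg : ∀ j : Fin m,
        IsAlgebraic (Algebra.adjoin K (Set.range (fun i : ↥s => g i.1))) (g j) := by
      intro j
      by_cases hj : j ∈ s
      · have hmem : g j ∈ Algebra.adjoin K (Set.range fun i : ↥s => g i.1) :=
          Algebra.subset_adjoin ⟨⟨j, hj⟩, rfl⟩
        exact isAlgebraic_algebraMap
          (⟨g j, hmem⟩ : Algebra.adjoin K (Set.range fun i : ↥s => g i.1))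
      · by_contra htrans
        have h1 : AlgebraicIndependent K fun o : Option ↥s => o.elim (g j) (fun i => g i.1) :=
          (hgind.option_iff_transcendental (g j)).2 htrans
        have h2 := insert_indep hj h1
        have h3 := hbound _ h2
        rw [Finset.card_insert_of_notMem hj] at h3
        omega
    set L : IntermediateField K F :=
      IntermediateField.adjoin K (Set.range fun i : ↥s => g i.1) with hLdef
    have halgL : ∀ j, IsAlgebraic (↥L) (g j) := by
      intro j
      exact IsAlgebraic.toIntermediateField
        ((halg j).tower_top_of_subalgebra_le
          (IntermediateField.algebra_adjoin_le_adjoin K _))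
    have hint : ∀ x ∈ Set.range g, IsIntegral (↥L) x := by
      rintro x ⟨j, rfl⟩; exact (halgL j).isIntegral
    haveI hAint : Algebra.IsIntegral (↥L) (Algebra.adjoin (↥L) (Set.range g)) :=
      Algebra.IsIntegral.adjoin hint
    have hmem1 : ι c ∈ Algebra.adjoin K (Set.range g) := by
      have h1 : ι c ∈ (Algebra.adjoin K (Set.range f)).map ι :=
        Subalgebra.mem_map.2 ⟨c, hc_mem, rfl⟩
      rw [AlgHom.map_adjoin, ← Set.range_comp] at h1
      exact h1
    have hmem2 : ι c ∈ Algebra.adjoin (↥L) (Set.range g) := by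
      have hle : Algebra.adjoin K (Set.range g) ≤
          (Algebra.adjoin (↥L) (Set.range g)).restrictScalars K :=
        Algebra.adjoin_le fun x hx => Algebra.subset_adjoin hx
      exact hle hmem1
    have halgc : IsAlgebraic (↥L) (ι c) := by
      have h1 : IsIntegral (↥L) (⟨ι c, hmem2⟩ : Algebra.adjoin (↥L) (Set.range g)) :=
        Algebra.IsIntegral.isIntegral _
      have h2 := h1.map (Algebra.adjoin (↥L) (Set.range g)).val
      exact h2.isAlgebraic
    -- fraction representation of elements of L
    set fs : ↥s → MvPolynomial (Fin n) K := fun i => f i.1 with hfsdef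
    have hcomm : ∀ z : MvPolynomial (↥s) K,
        ι (aeval fs z) = aeval (fun i : ↥s => g i.1) z := by
      intro z
      rw [← MvPolynomial.comp_aeval]
      rfl
    have hrep : ∀ cL : ↥L, ∃ u v : MvPolynomial (↥s) K,
        aeval fs v ≠ 0 ∧ (cL : F) * ι (aeval fs v) = ι (aeval fs u) := by
      intro cL
      obtain ⟨u, v, hv, heq⟩ := IsFractionRing.div_surjective
        (A := MvPolynomial (↥s) K) ((hgind.aevalEquivField.symm cL :
          FractionRing (MvPolynomial (↥s) K)))
      have hv0 : v ≠ 0 := nonZeroDivisors.ne_zero hv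
      have hinj' := algebraicIndependent_iff_injective_aeval.1 hgind
      have hvg : aeval (fun i : ↥s => g i.1) v ≠ 0 := by
        intro h
        exact hv0 (hinj' (by rw [h, map_zero]))
      have hfv : aeval fs v ≠ 0 := by
        intro h
        apply hvg
        rw [← hcomm, h, map_zero]
      refine ⟨u, v, hfv, ?_⟩
      have hc1 : (cL : F) = IsFractionRing.lift hinj' (hgind.aevalEquivField.symm cL) := by
        conv_lhs => rw [← AlgEquiv.apply_symm_apply hgind.aevalEquivField cL]
        rw [hgind.aevalEquivField_apply_coe]
      rw [hc1, ← heq, map_div₀, IsFractionRing.lift_algebraMap, IsFractionRing.lift_algebraMap,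
        hcomm, hcomm]
      exact div_mul_cancel₀ _ hvg
    -- get the polynomial over L
    obtain ⟨q, hq0, hqe⟩ := halgc
    set N := q.natDegree with hNdef
    choose u v hv hrepeq using fun k : ℕ => hrep (q.coeff k)
    set w : ℕ → MvPolynomial (Fin n) K := fun k =>
      aeval fs (u k) * ∏ j ∈ (Finset.range (N + 1)).erase k, aeval fs (v j) with hwdef
    set P : Polynomial (MvPolynomial (Fin n) K) :=
      ∑ k ∈ Finset.range (N + 1), Polynomial.C (w k) * Polynomial.X ^ k with hPdef
    have hPcoeff : ∀ k, P.coeff k = if k ∈ Finset.range (N + 1) then w k else 0 := by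
      intro k
      rw [hPdef, Polynomial.finset_sum_coeff]
      simp only [Polynomial.coeff_C_mul, Polynomial.coeff_X_pow]
      rw [Finset.sum_congr rfl (fun j _ => by rw [mul_ite, mul_one, mul_zero])]
      simp [Finset.sum_ite_eq' (Finset.range (N + 1)) k w, eq_comm]
    have hPeval : ι (Polynomial.eval c P) = 0 := by
      have h1 : Polynomial.eval c P = ∑ k ∈ Finset.range (N + 1), w k * c ^ k := by
        rw [hPdef, Polynomial.eval_finset_sum]
        simp [Polynomial.eval_mul, Polynomial.eval_pow]
      rw [h1, map_sum]
      have h2 : ∀ k ∈ Finset.range (N + 1),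
          ι (w k * c ^ k) = (q.coeff k : F) *
            (∏ j ∈ Finset.range (N + 1), ι (aeval fs (v j))) * (ι c) ^ k := by
        intro k hk
        have hwι : ι (w k) = (q.coeff k : F) *
            ∏ j ∈ Finset.range (N + 1), ι (aeval fs (v j)) := by
          rw [hwdef]
          simp only
          rw [map_mul, map_prod, ← hrepeq k, mul_assoc,
            Finset.mul_prod_erase (Finset.range (N + 1)) (fun j => ι (aeval fs (v j))) hk]
        rw [map_mul, map_pow, hwι]
      rw [Finset.sum_congr rfl h2]
      have h3 : ∑ k ∈ Finset.range (N + 1),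
          (q.coeff k : F) * (∏ j ∈ Finset.range (N + 1), ι (aeval fs (v j))) * (ι c) ^ k =
          (∏ j ∈ Finset.range (N + 1), ι (aeval fs (v j))) * Polynomial.aeval (ι c) q := by
        rw [Polynomial.aeval_eq_sum_range, Finset.mul_sum]
        refine Finset.sum_congr rfl fun k hk => ?_
        rw [Algebra.smul_def]
        have : algebraMap (↥L) F (q.coeff k) = (q.coeff k : F) := rfl
        rw [this]
        ring
      rw [h3, hqe, mul_zero]
    have hPev0 : Polynomial.eval c P = 0 := by
      apply hιinj
      rw [hPeval, map_zero]
    have hNcoeff : q.coeff N ≠ 0 := by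
      rw [hNdef]
      exact Polynomial.leadingCoeff_ne_zero.2 hq0
    have hP0 : P ≠ 0 := by
      intro h
      have h1 := hPcoeff N
      rw [h, Polynomial.coeff_zero] at h1
      simp only [Finset.mem_range, Nat.lt_succ_self, if_true] at h1
      have hu0 : aeval fs (u N) ≠ 0 := by
        intro h2
        have h3 := hrepeq N
        rw [h2, map_zero] at h3
        rcases mul_eq_zero.1 h3 with h4 | h4
        · exact hNcoeff (by exact_mod_cast h4)
        · exact hv N (hιinj (by rw [h4, map_zero]))
      apply hu0
      have hprod : ∏ j ∈ (Finset.range (N + 1)).erase N, aeval fs (v j) ≠ 0 :=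
        Finset.prod_ne_zero_iff.2 fun j _ => hv j
      rcases mul_eq_zero.1 h1.symm with h4 | h4
      · exact h4
      · exact absurd h4 hprod
    have hScoeff : ∀ k, P.coeff k ∈ Algebra.adjoin K (Set.range fs) := by
      intro k
      rw [hPcoeff k]
      split
      · rw [hwdef]
        simp only
        refine mul_mem ?_ (prod_mem fun j _ => ?_)
        · rw [Algebra.adjoin_range_eq_range_aeval]
          exact ⟨u k, rfl⟩
        · rw [Algebra.adjoin_range_eq_range_aeval]
          exact ⟨v j, rfl⟩
      · exact zero_mem _
    obtain ⟨Q, hQS, hQev, hQ0⟩ :=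
      exists_good (Algebra.adjoin K (Set.range fs)) hne P hP0 hScoeff hPev0
    -- final contradiction via φ
    have hb0 : φ (Q.coeff 0) = 0 := by
      have h1 : Polynomial.eval₂ (φ : MvPolynomial (Fin n) K →+* MvPolynomial (Fin r) K)
          ((φ : MvPolynomial (Fin n) K →+* MvPolynomial (Fin r) K) c) Q = 0 := by
        rw [Polynomial.eval₂_at_apply, hQev, map_zero]
      have hc0' : (φ : MvPolynomial (Fin n) K →+* MvPolynomial (Fin r) K) c = 0 := hc0
      rw [hc0', Polynomial.eval₂_at_zero] at h1
      exact h1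
    have hb1 := hQS 0
    rw [Algebra.adjoin_range_eq_range_aeval] at hb1
    obtain ⟨C0, hC0⟩ := hb1
    have hC0ne : C0 ≠ 0 := by
      intro h
      apply hQ0
      rw [← hC0, h, map_zero]
    apply hC0ne
    have hz : (aeval fun i : ↥s => φ (fs i)) C0 = 0 := by
      have hC0' : aeval fs C0 = Q.coeff 0 := hC0
      have h5 : φ (aeval fs C0) = 0 := by rw [hC0']; exact hb0
      rw [← MvPolynomial.comp_aeval]
      exact h5
    exact hφind.eq_zero_of_aeval_eq_zero C0 hz
  · intro hinj
    unfold trdeg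
    congr 1
    ext d
    constructor
    · rintro ⟨s, rfl, hs⟩
      exact ⟨s, rfl, AlgebraicIndependent.of_comp φ hs⟩
    · rintro ⟨s, rfl, hs⟩
      refine ⟨s, rfl, ?_⟩
      have hsub : (Algebra.adjoin K (Set.range fun i : ↥s => f i.1) :
          Set (MvPolynomial (Fin n) K)) ⊆
          (Algebra.adjoin K (Set.range f) : Subalgebra K (MvPolynomial (Fin n) K)) := by
        apply SetLike.coe_subset_coe.2
        apply Algebra.adjoin_mono
        rintro x ⟨i, rfl⟩
        exact ⟨i.1, rfl⟩
      exact hs.map (hinj.mono hsub)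
end

section
/- Let K be a field, C a polynomial in m variables over K, and f1,…,fm ∈ K[x1,…,xn]. If φ: K[x1,…,xn] → K[z1,…,zr] is a K-algebra homomorphism faithful to {f1,…,fm} (i.e., it preserves the transcendence degree of this set), then C(f1,…,fm) = 0 if and only if C(φ(f1),…,φ(fm)) = 0. -/
open MvPolynomial

theorem helperAlg {A R L : Type*} [CommRing A] [IsDomain A] [CommRing R] [IsDomain R] [Field L]
    [Algebra A R] [Algebra R L] [Algebra A L] [IsScalarTower A R L] [IsFractionRing R L]
    (hAR : Function.Injective (algebraMap A R))
    {m : ℕ} (f : Fin m → R) (halg : ∀ j, IsAlgebraic A (f j)) (u : R)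
    (huB : u ∈ Algebra.adjoin A (Set.range f)) : IsAlgebraic A u := by
  have hι : Function.Injective (algebraMap R L) := IsFractionRing.injective R L
  have hinjAL : Function.Injective (algebraMap A L) := by
    rw [IsScalarTower.algebraMap_eq A R L]
    exact hι.comp hAR
  haveI : Module.IsTorsionFree A L := NoZeroSMulDivisors.iff_algebraMap_injective.mpr hinjAL
  letI : Algebra (FractionRing A) L := FractionRing.liftAlgebra A L
  haveI : IsScalarTower A (FractionRing A) L := FractionRing.isScalarTower_liftAlgebra A L
  have hint : ∀ j, IsIntegral (FractionRing A) (algebraMap R L (f j)) := by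
    intro j
    rw [← isAlgebraic_iff_isIntegral]
    refine (IsFractionRing.isAlgebraic_iff A (FractionRing A) L).mp ?_
    obtain ⟨p, hp, hev⟩ := halg j
    refine ⟨p, hp, ?_⟩
    have h := Polynomial.aeval_algHom_apply (IsScalarTower.toAlgHom A R L) (f j) p
    rw [show (IsScalarTower.toAlgHom A R L) (f j) = algebraMap R L (f j) from rfl] at h
    rw [h, hev, map_zero]
  have huadj : algebraMap R L u ∈
      Algebra.adjoin (FractionRing A) (Set.range fun j => algebraMap R L (f j)) := by
    have h3 : algebraMap R L u ∈
        Subalgebra.map (IsScalarTower.toAlgHom A R L) (Algebra.adjoin A (Set.range f)) :=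
      ⟨u, huB, rfl⟩
    rw [AlgHom.map_adjoin] at h3
    have h4 : Algebra.adjoin A ((IsScalarTower.toAlgHom A R L) '' Set.range f) ≤
        (Algebra.adjoin (FractionRing A)
          (Set.range fun j => algebraMap R L (f j))).restrictScalars A := by
      apply Algebra.adjoin_le
      rintro x ⟨y, ⟨j, rfl⟩, rfl⟩
      simp only [SetLike.mem_coe, Subalgebra.mem_restrictScalars]
      exact Algebra.subset_adjoin ⟨j, rfl⟩
    exact h4 h3
  have hintu : IsIntegral (FractionRing A) (algebraMap R L u) := by
    have hle : Algebra.adjoin (FractionRing A) (Set.range fun j => algebraMap R L (f j)) ≤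
        integralClosure (FractionRing A) L :=
      Algebra.adjoin_le (by rintro x ⟨j, rfl⟩; exact hint j)
    exact hle huadj
  have h5 : IsAlgebraic A (algebraMap R L u) :=
    (IsFractionRing.isAlgebraic_iff A (FractionRing A) L).mpr hintu.isAlgebraic
  obtain ⟨p, hp, hev⟩ := h5
  refine ⟨p, hp, hι ?_⟩
  have h := Polynomial.aeval_algHom_apply (IsScalarTower.toAlgHom A R L) u p
  rw [map_zero, ← hev]
  exact h.symm

set_option maxHeartbeats 1000000 in
theorem faithful_preserves_nonzeroness (K : Type*) [Field K] (n m r : ℕ)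
    (C : MvPolynomial (Fin m) K) (f : Fin m → MvPolynomial (Fin n) K)
    (φ : MvPolynomial (Fin n) K →ₐ[K] MvPolynomial (Fin r) K)
    (hfaithful : trdeg K (fun i => φ (f i)) = trdeg K f) :
    MvPolynomial.aeval f C = 0 ↔ MvPolynomial.aeval (fun i => φ (f i)) C = 0 := by
  classical
  constructor
  · intro h
    rw [← comp_aeval_apply, h, map_zero]
  intro h
  by_contra hu
  rw [← comp_aeval_apply] at h
  set u := MvPolynomial.aeval f C with hudef
  -- the two trdeg sets
  set Tf := {r | ∃ s : Finset (Fin m), s.card = r ∧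
    AlgebraicIndependent K (fun i : ↥s => f i.1)} with hTf
  set Tg := {r | ∃ s : Finset (Fin m), s.card = r ∧
    AlgebraicIndependent K (fun i : ↥s => φ (f i.1))} with hTg
  have hbddf : BddAbove Tf := ⟨m, by rintro x ⟨s, rfl, -⟩; simpa using s.card_le_univ⟩
  have hbddg : BddAbove Tg := ⟨m, by rintro x ⟨s, rfl, -⟩; simpa using s.card_le_univ⟩
  have hneg : Tg.Nonempty := by
    refine ⟨0, ∅, Finset.card_empty, ?_⟩
    rw [algebraicIndependent_empty_type_iff]
    exact (algebraMap K (MvPolynomial (Fin r) K)).injective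
  have htg : trdeg K (fun i => φ (f i)) = sSup Tg := rfl
  have htf : trdeg K f = sSup Tf := rfl
  set d := sSup Tg with hd
  have hdmem : d ∈ Tg := Nat.sSup_mem hneg hbddg
  obtain ⟨s, hcard, hgs⟩ := hdmem
  have hfs : AlgebraicIndependent K (fun i : ↥s => f i.1) :=
    AlgebraicIndependent.of_comp φ hgs
  have hcard_le : ∀ t : Finset (Fin m),
      AlgebraicIndependent K (fun i : ↥t => f i.1) → t.card ≤ d := by
    intro t ht
    have h1 : t.card ∈ Tf := ⟨t, rfl, ht⟩
    have h2 : t.card ≤ sSup Tf := le_csSup hbddf h1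
    have h3 : sSup Tf = d := by rw [← htf, ← hfaithful]; exact htg
    exact h3 ▸ h2
  set B := Algebra.adjoin K (Set.range (fun i : ↥s => f i.1)) with hB
  -- every f j is algebraic over B
  have halg : ∀ j, IsAlgebraic B (f j) := by
    intro j
    by_cases hj : j ∈ s
    · exact isAlgebraic_algebraMap (⟨f j, Algebra.subset_adjoin ⟨⟨j, hj⟩, rfl⟩⟩ : B)
    · refine not_not.mp (fun htr => ?_)
      have hopt : AlgebraicIndependent K
          (fun o : Option ↥s => o.elim (f j) (fun i : ↥s => f i.1)) :=
        (hfs.option_iff_transcendental (f j)).mpr htr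
      have hinsert : AlgebraicIndependent K (fun i : ↥(insert j s) => f i.1) := by
        have hcomp := hopt.comp
          (fun i : ↥(insert j s) => if h : i.1 ∈ s then some ⟨i.1, h⟩ else none) ?_
        · convert hcomp using 1
          funext i
          by_cases hmem : i.1 ∈ s
          · simp [Function.comp, hmem]
          · have hij : i.1 = j := by
              rcases Finset.mem_insert.mp i.2 with h' | h'
              · exact h'
              · exact absurd h' hmem
            simp [Function.comp, hmem, hij, hj]
        · intro a b hab
          simp only [Function.comp] at hab
          by_cases ha : a.1 ∈ s
          · by_cases hb : b.1 ∈ s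
            · rw [dif_pos ha, dif_pos hb] at hab
              have h1 : (⟨a.1, ha⟩ : ↥s) = ⟨b.1, hb⟩ := Option.some_injective _ hab
              have h2 : a.1 = b.1 := congrArg (Subtype.val : ↥s → Fin m) h1
              exact Subtype.ext h2
            · rw [dif_pos ha, dif_neg hb] at hab
              exact absurd hab (by simp)
          · by_cases hb : b.1 ∈ s
            · rw [dif_neg ha, dif_pos hb] at hab
              exact absurd hab (by simp)
            · exact Subtype.ext (((Finset.mem_insert.mp a.2).resolve_right ha).trans
                (((Finset.mem_insert.mp b.2).resolve_right hb)).symm)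
      have hle := hcard_le _ hinsert
      rw [Finset.card_insert_of_notMem hj, hcard] at hle
      omega
  -- u is in the B-adjoin of the f j
  have huB : u ∈ Algebra.adjoin B (Set.range f) := by
    have h1 : u ∈ Algebra.adjoin K (Set.range f) := by
      rw [Algebra.adjoin_range_eq_range_aeval]
      exact ⟨C, rfl⟩
    have h2 : Algebra.adjoin K (Set.range f) ≤
        (Algebra.adjoin B (Set.range f)).restrictScalars K :=
      Algebra.adjoin_le (fun x hx => Algebra.subset_adjoin hx)
    exact h2 h1
  -- u is algebraic over B
  letI alg1 : Algebra B (FractionRing (MvPolynomial (Fin n) K)) :=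
    ((algebraMap (MvPolynomial (Fin n) K) (FractionRing (MvPolynomial (Fin n) K))).comp
      (algebraMap B (MvPolynomial (Fin n) K))).toAlgebra
  haveI tower : @IsScalarTower B (MvPolynomial (Fin n) K)
      (FractionRing (MvPolynomial (Fin n) K)) Algebra.toSMul Algebra.toSMul Algebra.toSMul :=
    IsScalarTower.of_algebraMap_eq' rfl
  have halgu : IsAlgebraic B u :=
    helperAlg (L := FractionRing (MvPolynomial (Fin n) K))
      (show Function.Injective (algebraMap B (MvPolynomial (Fin n) K))
        from Subtype.val_injective) f halg u huB
  -- extract a polynomial with nonzero constant coefficient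
  obtain ⟨p, hp0, hpu⟩ := halgu
  set k := p.natTrailingDegree with hk
  have hdvd : Polynomial.X ^ p.natTrailingDegree ∣ p :=
    Polynomial.X_pow_dvd_iff.mpr (fun d hd => Polynomial.coeff_eq_zero_of_lt_natTrailingDegree hd)
  obtain ⟨q, hq⟩ := hdvd
  have hq0 : q.coeff 0 ≠ 0 := by
    have hco : p.coeff k = q.coeff 0 := by
      rw [hq]
      simpa using Polynomial.coeff_X_pow_mul q k 0
    rw [← hco]
    exact Polynomial.trailingCoeff_nonzero_iff_nonzero.mpr hp0
  have hqu : Polynomial.aeval u q = 0 := by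
    have hm : Polynomial.aeval u p = u ^ k * Polynomial.aeval u q := by
      rw [hq, map_mul, map_pow, Polynomial.aeval_X]
    rw [hpu] at hm
    rcases mul_eq_zero.mp hm.symm with h' | h'
    · exact absurd h' (pow_ne_zero _ hu)
    · exact h'
  -- apply φ
  have hphi : φ (Polynomial.aeval u q) =
      Polynomial.eval₂ ((φ : MvPolynomial (Fin n) K →+* MvPolynomial (Fin r) K).comp
        (algebraMap B (MvPolynomial (Fin n) K))) (φ u) q := by
    rw [Polynomial.aeval_def]
    exact Polynomial.hom_eval₂ q (algebraMap B (MvPolynomial (Fin n) K))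
      (φ : MvPolynomial (Fin n) K →+* MvPolynomial (Fin r) K) u
  have hzero : φ (algebraMap B (MvPolynomial (Fin n) K) (q.coeff 0)) = 0 := by
    have h6 := hphi
    rw [hqu, map_zero, h, Polynomial.eval₂_at_zero] at h6
    exact h6.symm
  -- contradiction with algebraic independence of the φ (f i)
  have hmem : (q.coeff 0 : MvPolynomial (Fin n) K) ∈
      Algebra.adjoin K (Set.range (fun i : ↥s => f i.1)) := (q.coeff 0).2
  rw [Algebra.adjoin_range_eq_range_aeval] at hmem
  obtain ⟨Q, hQ⟩ := hmem
  have hgQ : MvPolynomial.aeval (fun i : ↥s => φ (f i.1)) Q = 0 := by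
    rw [← comp_aeval_apply]
    rw [show MvPolynomial.aeval (fun i : ↥s => f i.1) Q = (q.coeff 0 : MvPolynomial (Fin n) K)
      from hQ]
    exact hzero
  have hQ0 : Q = 0 := by
    have hinj := algebraicIndependent_iff_injective_aeval.mp hgs
    apply hinj
    rw [hgQ, map_zero]
  rw [hQ0, map_zero] at hQ
  exact hq0 (Subtype.ext hQ.symm)
end

section
/- Let K be a field and f1,…,fm ∈ K[x1,…,xn]. Then the transcendence degree over K of {f1,…,fm} is at least the rank over the function field L = K(x1,…,xn) of the Jacobian matrix J(f1,…,fm) = (∂fi/∂xj), regardless of the characteristic of K. -/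
open MvPolynomial

lemma jac_pderiv_as_sum {R : Type*} [CommRing R] {ι : Type*} (Q : MvPolynomial ι R) (i : ι) :
    pderiv i Q = ∑ α ∈ Q.support,
      monomial (α - Finsupp.single i 1) (Q.coeff α * α i) := by
  conv_lhs => rw [← Q.support_sum_monomial_coeff]
  rw [map_sum]
  exact Finset.sum_congr rfl fun α _ => pderiv_monomial

lemma jac_coeff_zero_of_pderiv_eq_zero {R : Type*} [CommRing R] {ι : Type*}
    {Q : MvPolynomial ι R} {i : ι} (h : pderiv i Q = 0)
    {α : ι →₀ ℕ} (hα : α ∈ Q.support) : Q.coeff α * (α i : R) = 0 := by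
  classical
  by_cases h0 : α i = 0
  · simp [h0]
  have h1 : Finsupp.single i 1 ≤ α := Finsupp.single_le_iff.mpr (Nat.one_le_iff_ne_zero.mpr h0)
  have := congrArg (coeff (α - Finsupp.single i 1)) (jac_pderiv_as_sum Q i ▸ h)
  rw [coeff_zero] at this
  rw [← this, coeff_sum, Finset.sum_eq_single α]
  · simp [coeff_monomial]
  · intro β hβ hne
    rw [coeff_monomial, ite_eq_right_iff]
    intro he
    by_cases hb0 : β i = 0
    · simp [hb0]
    · exact absurd (by
        have h2 : Finsupp.single i 1 ≤ β :=
          Finsupp.single_le_iff.mpr (Nat.one_le_iff_ne_zero.mpr hb0)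
        calc β = β - Finsupp.single i 1 + Finsupp.single i 1 := (tsub_add_cancel_of_le h2).symm
        _ = α - Finsupp.single i 1 + Finsupp.single i 1 := by rw [he]
        _ = α := tsub_add_cancel_of_le h1) hne
  · intro hc
    exact absurd hα hc

lemma jac_totalDegree_pderiv_lt {R : Type*} [CommRing R] {ι : Type*}
    (Q : MvPolynomial ι R) (i : ι) (hd : 0 < Q.totalDegree) :
    (pderiv i Q).totalDegree < Q.totalDegree := by
  classical
  rw [jac_pderiv_as_sum]
  refine lt_of_le_of_lt (totalDegree_finset_sum _ _) ?_
  rw [Finset.sup_lt_iff (by simpa using hd)]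
  intro α hα
  by_cases h0 : α i = 0
  · simp [h0, totalDegree_zero, hd]
  · refine lt_of_le_of_lt (totalDegree_monomial_le _ _) ?_
    have h1 : Finsupp.single i 1 ≤ α := Finsupp.single_le_iff.mpr (Nat.one_le_iff_ne_zero.mpr h0)
    have hsum : (α - Finsupp.single i 1).sum (fun _ e => e) + 1 = α.sum (fun _ e => e) := by
      conv_rhs => rw [← tsub_add_cancel_of_le h1]
      rw [Finsupp.sum_add_index' (fun _ => rfl) (fun _ _ _ => rfl)]
      simp
    have h2 : α.sum (fun _ e => e) ≤ Q.totalDegree := le_totalDegree hα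
    simp only [Finsupp.sum, id] at hsum h2 ⊢
    omega


lemma jac_chainRule {R : Type*} [CommRing R] {ι τ : Type*} [Fintype ι] [DecidableEq ι]
    (g : ι → MvPolynomial τ R) (j : τ) (P : MvPolynomial ι R) :
    pderiv j (aeval g P) = ∑ k, aeval g (pderiv k P) * pderiv j (g k) := by
  induction P using MvPolynomial.induction_on with
  | C a => simp
  | add p q hp hq =>
      simp only [map_add, hp, hq, add_mul, Finset.sum_add_distrib]
  | mul_X p k hp =>
      simp only [map_mul, aeval_X, pderiv_mul, hp, map_add, add_mul, Finset.sum_add_distrib]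
      congr 1
      · rw [Finset.sum_mul]
        apply Finset.sum_congr rfl
        intro l _
        ring
      · rw [Finset.sum_eq_single k]
        · simp
        · intro l _ hl
          simp [pderiv_X, Pi.single_eq_of_ne (Ne.symm hl)]
        · simp


section
variable {K' : Type*} [Field K'] [IsAlgClosed K'] {ι τ : Type*}

lemma jac_ne_zero_of_C {g : ι → MvPolynomial τ K'} {Q : MvPolynomial ι K'}
    (hQ : Q ≠ 0) (hrel : aeval g Q = 0) : 0 < Q.totalDegree := by
  rcases Nat.eq_zero_or_pos Q.totalDegree with h | h
  swap
  · exact h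
  exfalso
  have hsupp : ∀ α ∈ Q.support, α = 0 := by
    intro α hα
    ext x
    exact ((totalDegree_eq_zero_iff ι Q).mp h) α hα x
  have hsN : Q.support.Nonempty := support_nonempty.mpr hQ
  have hs1 : Q.support = {0} := Finset.eq_singleton_iff_nonempty_unique_mem.mpr ⟨hsN, hsupp⟩
  have hQC : Q = monomial 0 (Q.coeff 0) := by
    conv_lhs => rw [← Q.support_sum_monomial_coeff, hs1, Finset.sum_singleton]
  have hc : Q.coeff 0 ≠ 0 := mem_support_iff.mp (hs1 ▸ Finset.mem_singleton_self 0)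
  rw [hQC, monomial_zero', aeval_C] at hrel
  exact hc ((map_eq_zero_iff _ (algebraMap K' (MvPolynomial τ K')).injective).mp hrel)

lemma jac_exists_good_relation [Fintype ι] (g : ι → MvPolynomial τ K')
    (h : ∃ P : MvPolynomial ι K', P ≠ 0 ∧ aeval g P = 0) :
    ∃ Q : MvPolynomial ι K', aeval g Q = 0 ∧ ∃ k, aeval g (pderiv k Q) ≠ 0 := by
  classical
  set S : Set (MvPolynomial ι K') := {P | P ≠ 0 ∧ aeval g P = 0} with hS
  set T : Set ℕ := totalDegree '' S with hT
  have hTne : T.Nonempty := ⟨h.choose.totalDegree, h.choose, h.choose_spec, rfl⟩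
  obtain ⟨Q, hQS, hQd⟩ := Nat.sInf_mem hTne
  have hmin : ∀ P ∈ S, sInf T ≤ P.totalDegree := fun P hP => Nat.sInf_le ⟨P, hP, rfl⟩
  obtain ⟨hQ0, hQrel⟩ := hQS
  have hdpos : 0 < Q.totalDegree := jac_ne_zero_of_C hQ0 hQrel
  -- some partial derivative of Q is nonzero
  have hpd : ∃ k, pderiv k Q ≠ 0 := by
    by_contra hall
    push_neg at hall
    have hcast : ∀ α ∈ Q.support, ∀ k, ((α k : K')) = 0 := by
      intro α hα k
      have := jac_coeff_zero_of_pderiv_eq_zero (hall k) hα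
      rcases mul_eq_zero.mp this with h1 | h1
      · exact absurd h1 (mem_support_iff.mp hα)
      · exact h1
    set p := ringChar K' with hp
    rcases CharP.char_is_prime_or_zero K' p with hprime | hzero
    · -- char p prime : build a p-th root of Q
      haveI : Fact p.Prime := ⟨hprime⟩
      have hdvd : ∀ α ∈ Q.support, ∀ k, p ∣ α k := by
        intro α hα k
        exact (CharP.cast_eq_zero_iff K' p (α k)).mp (hcast α hα k)
      haveI : CharP (MvPolynomial ι K') p :=
        charP_of_injective_ringHom (C_injective ι K') p
      set root : (ι →₀ ℕ) → K' := fun α =>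
        (IsAlgClosed.exists_pow_nat_eq (Q.coeff α) hprime.pos).choose with hroot
      have hrootp : ∀ α, (root α) ^ p = Q.coeff α := fun α =>
        (IsAlgClosed.exists_pow_nat_eq (Q.coeff α) hprime.pos).choose_spec
      set divp : (ι →₀ ℕ) → (ι →₀ ℕ) := fun α => Finsupp.mapRange (· / p) (Nat.zero_div p) α
        with hdivp
      set R0 : MvPolynomial ι K' := ∑ α ∈ Q.support, monomial (divp α) (root α) with hR0
      have hsmul : ∀ α ∈ Q.support, p • (divp α) = α := by
        intro α hα
        ext k
        rw [Finsupp.smul_apply, hdivp]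
        simp only [Finsupp.mapRange_apply, smul_eq_mul]
        exact Nat.mul_div_cancel' (hdvd α hα k)
      have hpow : R0 ^ p = Q := by
        rw [hR0, sum_pow_char]
        conv_rhs => rw [← Q.support_sum_monomial_coeff]
        apply Finset.sum_congr rfl
        intro α hα
        rw [monomial_pow, hrootp, hsmul α hα]
      have hR0ne : R0 ≠ 0 := by
        intro h0
        rw [h0, zero_pow hprime.ne_zero] at hpow
        exact hQ0 hpow.symm
      have hR0rel : aeval g R0 = 0 := by
        have : (aeval g R0) ^ p = 0 := by rw [← map_pow, hpow, hQrel]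
        exact pow_eq_zero_iff hprime.ne_zero |>.mp this
      have hR0deg : R0.totalDegree < Q.totalDegree := by
        rw [hR0]
        refine lt_of_le_of_lt (totalDegree_finset_sum _ _) ?_
        rw [Finset.sup_lt_iff (by simpa using hdpos)]
        intro α hα
        refine lt_of_le_of_lt (totalDegree_monomial_le _ _) ?_
        have hps : p * ∑ k ∈ α.support, (α k / p) = ∑ k ∈ α.support, α k := by
          rw [Finset.mul_sum]
          exact Finset.sum_congr rfl fun k _ => Nat.mul_div_cancel' (hdvd α hα k)
        have hdsum : (divp α).sum (fun _ => id) = ∑ k ∈ α.support, (α k / p) := by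
          rw [Finsupp.sum_of_support_subset _ Finsupp.support_mapRange _ (fun _ _ => rfl)]
          exact Finset.sum_congr rfl fun k _ => rfl
        have h2X : 2 * ∑ k ∈ α.support, (α k / p) ≤ ∑ k ∈ α.support, α k := by
          calc 2 * ∑ k ∈ α.support, (α k / p)
              ≤ p * ∑ k ∈ α.support, (α k / p) := mul_le_mul_left hprime.two_le _
            _ = ∑ k ∈ α.support, α k := hps
        have hle : (∑ k ∈ α.support, α k) ≤ Q.totalDegree := by
          have := le_totalDegree hα
          simpa [Finsupp.sum] using this
        rw [hdsum]
        omega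
      have := hmin R0 ⟨hR0ne, hR0rel⟩
      rw [← hQd] at this
      omega
    · -- char zero
      haveI : CharP K' 0 := hzero ▸ (ringChar.charP K')
      haveI : CharZero K' := CharP.charP_to_charZero K'
      have : Q.totalDegree = 0 := by
        rw [totalDegree_eq_zero_iff]
        intro α hα k
        exact Nat.cast_injective (R := K') (by rw [hcast α hα k, Nat.cast_zero])
      omega
  obtain ⟨k, hk⟩ := hpd
  refine ⟨Q, hQrel, k, ?_⟩
  intro hbad
  have : sInf T ≤ (pderiv k Q).totalDegree := hmin _ ⟨hk, hbad⟩
  have hlt := jac_totalDegree_pderiv_lt Q k hdpos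
  omega

end


lemma jac_descend {K K' τ ι : Type*} [Field K] [Field K'] [Algebra K K'] [Fintype ι]
    (c : ι → MvPolynomial τ K') (h : ι → τ → MvPolynomial τ K)
    (hrel : ∀ j, ∑ k, c k * MvPolynomial.map (algebraMap K K') (h k j) = 0)
    (k₁ : ι) (hk₁ : c k₁ ≠ 0) :
    ∃ c' : ι → MvPolynomial τ K, (∃ k, c' k ≠ 0) ∧ ∀ j, ∑ k, c' k * h k j = 0 := by
  classical
  obtain ⟨d₀, hd₀⟩ := ne_zero_iff.mp hk₁
  set u : K' := coeff d₀ (c k₁) with hu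
  have hker : LinearMap.ker (LinearMap.toSpanSingleton K K' u) = ⊥ := by
    rw [LinearMap.ker_eq_bot]
    intro x y hxy
    simp only [LinearMap.toSpanSingleton_apply, Algebra.smul_def] at hxy
    exact (algebraMap K K').injective (mul_right_cancel₀ hd₀ hxy)
  obtain ⟨lamL, hlam⟩ := LinearMap.exists_leftInverse_of_injective _ hker
  have hlamu : lamL u = 1 := by
    have h1 := LinearMap.congr_fun hlam (1 : K)
    simpa [LinearMap.toSpanSingleton_apply] using h1
  have hlamsmul : ∀ (x : K) (y : K'), lamL (algebraMap K K' x * y) = x * lamL y := by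
    intro x y
    rw [← Algebra.smul_def]
    simpa using lamL.map_smul x y
  set Lam : MvPolynomial τ K' → MvPolynomial τ K :=
    fun q => ∑ d ∈ q.support, monomial d (lamL (coeff d q)) with hLam
  have hLamcoeff : ∀ q e, coeff e (Lam q) = lamL (coeff e q) := by
    intro q e
    rw [hLam]
    simp only [coeff_sum, coeff_monomial]
    rw [Finset.sum_ite_eq' q.support e (fun d => lamL (coeff d q))]
    split_ifs with he
    · rfl
    · rw [notMem_support_iff.mp he, map_zero]
  refine ⟨fun k => Lam (c k), ⟨k₁, ?_⟩, ?_⟩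
  · intro hzero
    have := congrArg (coeff d₀) hzero
    rw [hLamcoeff, coeff_zero, hlamu] at this
    exact one_ne_zero this
  · intro j
    ext e
    rw [coeff_zero, coeff_sum]
    have hterm : ∀ k, coeff e (Lam (c k) * h k j)
        = lamL (coeff e (c k * map (algebraMap K K') (h k j))) := by
      intro k
      rw [coeff_mul, coeff_mul, map_sum lamL]
      apply Finset.sum_congr rfl
      intro uv _
      rw [hLamcoeff, coeff_map, mul_comm (coeff uv.1 (c k)) _, hlamsmul]
      ring
    rw [Finset.sum_congr rfl fun k _ => hterm k, ← map_sum lamL, ← coeff_sum, hrel j,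
      coeff_zero, map_zero]

theorem jacobian_rank_le_trdeg (K : Type*) [Field K] (n m : ℕ)
    (f : Fin m → MvPolynomial (Fin n) K) :
    (Matrix.of fun (i : Fin m) (j : Fin n) =>
        algebraMap (MvPolynomial (Fin n) K) (FractionRing (MvPolynomial (Fin n) K))
          (MvPolynomial.pderiv j (f i))).rank ≤ trdeg K f := by
  classical
  set L := FractionRing (MvPolynomial (Fin n) K) with hL
  set M : Matrix (Fin m) (Fin n) L :=
    Matrix.of (fun i j => algebraMap (MvPolynomial (Fin n) K) L (pderiv j (f i))) with hM
  rw [Matrix.rank_eq_finrank_span_row]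
  change Module.finrank L (Submodule.span L (Set.range M)) ≤ _
  obtain ⟨b, hbsub, hbspan, hbind⟩ := exists_linearIndependent L (Set.range M)
  have hbfin : b.Finite := (Set.finite_range _).subset hbsub
  haveI := hbfin.fintype
  rw [← hbspan, finrank_span_set_eq_card hbind]
  have hex : ∀ v : b, ∃ i : Fin m, M i = (v : Fin n → L) := fun v => hbsub v.2
  choose F hF using hex
  have hFinj : Function.Injective F := by
    intro v w hvw
    apply Subtype.ext
    rw [← hF v, ← hF w, hvw]
  set s : Finset (Fin m) := Finset.image F Finset.univ with hs
  have hcard : s.card = b.toFinset.card := by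
    rw [hs, Finset.card_image_of_injective _ hFinj, Finset.card_univ, Set.toFinset_card]
  rw [← hcard]
  have hmemb : ∀ i : ↥s, M i.1 ∈ b := by
    rintro ⟨i, hi⟩
    obtain ⟨v, -, hvv⟩ := Finset.mem_image.mp hi
    simpa [← hvv, hF v] using (v : b).2
  set e : ↥s → ↥b := fun i => ⟨M i.1, hmemb i⟩ with he
  have heinj : Function.Injective e := by
    rintro ⟨i, hi⟩ ⟨i', hi'⟩ hee
    obtain ⟨v, -, hvv⟩ := Finset.mem_image.mp hi
    obtain ⟨v', -, hvv'⟩ := Finset.mem_image.mp hi'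
    have hMM : M i = M i' := congrArg Subtype.val hee
    have hvv2 : v = v' := by
      apply Subtype.ext
      rw [← hF v, ← hF v', hvv, hvv', hMM]
    apply Subtype.ext
    show i = i'
    rw [← hvv, ← hvv', hvv2]
  have hli : LinearIndependent L (fun i : ↥s => M i.1) := hbind.comp e heinj
  have hAI : AlgebraicIndependent K (fun i : ↥s => f i.1) := by
    rw [algebraicIndependent_iff]
    intro p hp0
    by_contra hpne
    have hP'ne : MvPolynomial.map (algebraMap K (AlgebraicClosure K)) p ≠ 0 := by
      intro h0
      exact hpne (MvPolynomial.map_injective _ (algebraMap K (AlgebraicClosure K)).injective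
        (by rw [h0, map_zero]))
    set g' : ↥s → MvPolynomial (Fin n) (AlgebraicClosure K) :=
      fun i => MvPolynomial.map (algebraMap K (AlgebraicClosure K)) (f i.1) with hg'
    have hhom : (MvPolynomial.map (algebraMap K (AlgebraicClosure K))).comp
        (algebraMap K (MvPolynomial (Fin n) K))
        = algebraMap K (MvPolynomial (Fin n) (AlgebraicClosure K)) := by
      ext1 k
      rw [RingHom.comp_apply, MvPolynomial.algebraMap_eq, map_C,
        IsScalarTower.algebraMap_apply K (AlgebraicClosure K)
          (MvPolynomial (Fin n) (AlgebraicClosure K)), MvPolynomial.algebraMap_eq]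
    have hP'rel : aeval g' (MvPolynomial.map (algebraMap K (AlgebraicClosure K)) p) = 0 := by
      have h1 : aeval g' (MvPolynomial.map (algebraMap K (AlgebraicClosure K)) p)
          = MvPolynomial.map (algebraMap K (AlgebraicClosure K))
              (aeval (fun i : ↥s => f i.1) p) := by
        rw [aeval_map_algebraMap, map_aeval, hhom]
        rfl
      rw [h1, hp0, map_zero]
    obtain ⟨Q, hQrel, k₁, hk₁⟩ := jac_exists_good_relation g'
      ⟨MvPolynomial.map (algebraMap K (AlgebraicClosure K)) p, hP'ne, hP'rel⟩
    have hrel' : ∀ j : Fin n, ∑ k : ↥s, aeval g' (pderiv k Q)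
        * MvPolynomial.map (algebraMap K (AlgebraicClosure K)) (pderiv j (f k.1)) = 0 := by
      intro j
      have hcr := jac_chainRule g' j Q
      rw [hQrel, map_zero] at hcr
      calc ∑ k : ↥s, aeval g' (pderiv k Q)
            * MvPolynomial.map (algebraMap K (AlgebraicClosure K)) (pderiv j (f k.1))
          = ∑ k : ↥s, aeval g' (pderiv k Q) * pderiv j (g' k) :=
            Finset.sum_congr rfl fun k _ => congrArg _ pderiv_map.symm
        _ = 0 := hcr.symm
    obtain ⟨c', ⟨k₂, hk₂⟩, hc'rel⟩ := jac_descend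
      (fun k : ↥s => aeval g' (pderiv k Q)) (fun k j => pderiv j (f k.1)) hrel' k₁ hk₁
    have hsum : ∑ k : ↥s,
        (algebraMap (MvPolynomial (Fin n) K) L (c' k)) • M k.1 = 0 := by
      funext j
      simp only [Finset.sum_apply, Pi.smul_apply, smul_eq_mul, Pi.zero_apply]
      calc ∑ k : ↥s, algebraMap (MvPolynomial (Fin n) K) L (c' k) * M k.1 j
          = algebraMap (MvPolynomial (Fin n) K) L (∑ k : ↥s, c' k * pderiv j (f k.1)) := by
            rw [map_sum]
            exact Finset.sum_congr rfl fun k _ => (map_mul _ _ _).symm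
        _ = 0 := by rw [hc'rel j, map_zero]
    have hz := Fintype.linearIndependent_iff.mp hli
      (fun k => algebraMap (MvPolynomial (Fin n) K) L (c' k)) hsum k₂
    exact hk₂ (IsFractionRing.injective (MvPolynomial (Fin n) K) L (by rw [hz, map_zero]))
  refine le_csSup ⟨m, fun r hr => ?_⟩ ⟨s, rfl, hAI⟩
  obtain ⟨t, ht, -⟩ := hr
  rw [← ht]
  exact le_trans (Finset.card_le_univ t) (le_of_eq (Fintype.card_fin m))
end

section
/- Let R be a commutative ring, ℓ ≥ 1, d ≥ 2, and let f ∈ R[t] be a nonzero polynomial with at most ℓ nonzero terms and degree at most d. Then the number of prime numbers p such that f ≡ 0 modulo the ideal ⟨t^p − 1⟩ of R[t] is at most ℓ·log₂(d) − 1. -/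
open Polynomial

lemma key_lemma {R : Type*} [CommRing R] (f : Polynomial R) (hf : f ≠ 0) (p : ℕ)
    (hmem : f ∈ Ideal.span {(X : Polynomial R) ^ p - 1}) :
    ∃ j ∈ f.support, j ≠ f.natDegree ∧ ((j : ZMod p) = (f.natDegree : ZMod p)) := by
  classical
  set A := AddMonoidAlgebra R (ZMod p)
  set x : A := AddMonoidAlgebra.single (1 : ZMod p) (1 : R) with hx
  have hxpow : ∀ n : ℕ, x ^ n = AddMonoidAlgebra.single ((n : ZMod p)) (1 : R) := by
    intro n
    rw [hx, AddMonoidAlgebra.single_pow, one_pow, nsmul_eq_mul, mul_one]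
  have hker : (Polynomial.aeval x) ((X : Polynomial R) ^ p - 1) = 0 := by
    rw [map_sub, map_pow, map_one, aeval_X, hxpow, ZMod.natCast_self,
      AddMonoidAlgebra.one_def, sub_self]
  have hzero : (Polynomial.aeval x) f = 0 := by
    rw [Ideal.mem_span_singleton] at hmem
    obtain ⟨g, rfl⟩ := hmem
    rw [map_mul, hker, zero_mul]
  have hsum : (Polynomial.aeval x) f
      = ∑ j ∈ f.support, AddMonoidAlgebra.single ((j : ZMod p)) (f.coeff j) := by
    rw [Polynomial.aeval_def, Polynomial.eval₂_eq_sum, Polynomial.sum_def]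
    refine Finset.sum_congr rfl fun j hj => ?_
    rw [hxpow, AddMonoidAlgebra.coe_algebraMap, Function.comp_apply,
      Algebra.algebraMap_self, RingHom.id_apply, AddMonoidAlgebra.single_mul_single,
      zero_add, mul_one]
  by_contra hcon
  push_neg at hcon
  have happ : ∑ j ∈ f.support,
      (AddMonoidAlgebra.single ((j : ZMod p)) (f.coeff j)).coeff ((f.natDegree : ZMod p)) = 0 := by
    rw [← Finset.sum_apply', ← AddMonoidAlgebra.coeff_sum, ← hsum, hzero]; rfl
  rw [Finset.sum_eq_single f.natDegree (fun j hj hne => ?_) (fun h => ?_)] at happ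
  · rw [AddMonoidAlgebra.coeff_single, Finsupp.single_apply, if_pos rfl] at happ
    exact (Polynomial.mem_support_iff.mp (Polynomial.natDegree_mem_support_of_nonzero hf)) happ
  · rw [AddMonoidAlgebra.coeff_single, Finsupp.single_apply, if_neg (hcon j hj hne)]
  · exact absurd (Polynomial.natDegree_mem_support_of_nonzero hf) h

theorem sparse_pit_primes (R : Type*) [CommRing R] (ℓ d : ℕ) (hℓ : 1 ≤ ℓ) (hd : 2 ≤ d)
    (f : Polynomial R) (hf : f ≠ 0) (hsparse : f.support.card ≤ ℓ)
    (hdeg : f.natDegree ≤ d) :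
    {p : ℕ | p.Prime ∧ f ∈ Ideal.span {(Polynomial.X : Polynomial R) ^ p - 1}}.Finite ∧
    (({p : ℕ | p.Prime ∧ f ∈ Ideal.span {(Polynomial.X : Polynomial R) ^ p - 1}}.ncard : ℝ)
      ≤ ℓ * Real.logb 2 d - 1) := by
  classical
  set S := {p : ℕ | p.Prime ∧ f ∈ Ideal.span {(Polynomial.X : Polynomial R) ^ p - 1}} with hSdef
  set e := f.natDegree with he
  set T := f.support.erase e with hT
  set N := ∏ j ∈ T, (e - j) with hNdef
  have heS : e ∈ f.support := Polynomial.natDegree_mem_support_of_nonzero hf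
  have hjlt : ∀ j ∈ T, j < e := fun j hj => by
    obtain ⟨hne, hjs⟩ := Finset.mem_erase.mp hj
    exact lt_of_le_of_ne (Polynomial.le_natDegree_of_ne_zero (Polynomial.mem_support_iff.mp hjs)) hne
  have hdvd : ∀ p ∈ S, p.Prime ∧ p ∣ N := by
    intro p hp
    obtain ⟨hpp, hmem⟩ := hp
    obtain ⟨j, hj, hne, hcast⟩ := key_lemma f hf p hmem
    refine ⟨hpp, dvd_trans ?_ (Finset.dvd_prod_of_mem _ (Finset.mem_erase.mpr ⟨hne, hj⟩))⟩
    have hle : j ≤ e := Polynomial.le_natDegree_of_ne_zero (Polynomial.mem_support_iff.mp hj)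
    exact (Nat.modEq_iff_dvd' hle).mp ((ZMod.natCast_eq_natCast_iff _ _ _).mp hcast)
  have hNpos : 0 < N := Finset.prod_pos fun j hj => Nat.sub_pos_of_lt (hjlt j hj)
  have hNle : N ≤ d ^ (ℓ - 1) := by
    calc N ≤ ∏ _j ∈ T, d := Finset.prod_le_prod' fun j _ => le_trans (Nat.sub_le _ _) hdeg
    _ = d ^ T.card := Finset.prod_const d
    _ ≤ d ^ (ℓ - 1) := by
        refine Nat.pow_le_pow_right (by omega) ?_
        rw [hT, Finset.card_erase_of_mem heS]
        omega
  have hsub : S ⊆ ↑N.primeFactors := fun p hp =>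
    Nat.mem_primeFactors.mpr ⟨(hdvd p hp).1, (hdvd p hp).2, hNpos.ne'⟩
  have hfin : S.Finite := Set.Finite.subset N.primeFactors.finite_toSet hsub
  refine ⟨hfin, ?_⟩
  set F := hfin.toFinset with hF
  have hcard : S.ncard = F.card := Set.ncard_eq_toFinset_card S hfin
  have hmemF : ∀ p ∈ F, p.Prime ∧ p ∣ N := fun p hp => hdvd p (hfin.mem_toFinset.mp hp)
  have hprodvd : (∏ p ∈ F, p) ∣ N :=
    Finset.prod_primes_dvd N (fun p hp => (hmemF p hp).1.prime) (fun p hp => (hmemF p hp).2)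
  have h2 : 2 ^ F.card ≤ ∏ p ∈ F, p :=
    Finset.pow_card_le_prod F _ 2 fun p hp => (hmemF p hp).1.two_le
  have hchain : 2 ^ F.card ≤ d ^ (ℓ - 1) :=
    le_trans (le_trans h2 (Nat.le_of_dvd hNpos hprodvd)) hNle
  have hchainR : (2 : ℝ) ^ F.card ≤ (d : ℝ) ^ (ℓ - 1) := by exact_mod_cast hchain
  have hlog : Real.logb 2 ((2 : ℝ) ^ F.card) ≤ Real.logb 2 ((d : ℝ) ^ (ℓ - 1)) :=
    Real.logb_le_logb_of_le one_lt_two (pow_pos two_pos _) hchainR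
  rw [Real.logb_pow, Real.logb_pow, Real.logb_self_eq_one one_lt_two] at hlog
  have hL : 1 ≤ Real.logb 2 (d : ℝ) := by
    rw [show (1 : ℝ) = Real.logb 2 2 from (Real.logb_self_eq_one one_lt_two).symm]
    exact Real.logb_le_logb_of_le one_lt_two two_pos (by exact_mod_cast hd)
  have hcast : ((ℓ - 1 : ℕ) : ℝ) = (ℓ : ℝ) - 1 := by
    rw [Nat.cast_sub hℓ, Nat.cast_one]
  rw [hcard]
  rw [mul_one, hcast] at hlog
  nlinarith [hlog, hL]
end

section
/- For every real number r ≥ 2, the interval [1, r² + 1] contains at least ⌈r⌉ prime numbers. -/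
open Nat

private lemma pb_mono {a b : ℕ} (h : a ≤ b) :
    a.primesBelow.card ≤ b.primesBelow.card := by
  simpa [Nat.primesBelow_card_eq_primeCounting'] using Nat.monotone_primeCounting' h

private lemma pb_eq (n : ℕ) :
    n.primesBelow = @Finset.filter _ Nat.Prime (fun a => Nat.decidablePrime a) (Finset.range n) := by
  ext p
  simp [Nat.mem_primesBelow, Finset.mem_filter, Finset.mem_range, and_comm]

/-- Chebyshev-type inequality from the central binomial coefficient. -/
private lemma cheb (n : ℕ) (hn : 0 < n) :
    4 ^ n ≤ (2 * n) ^ ((2 * n + 1).primesBelow.card + 1) := by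
  have h2n : 0 < 2 * n := by omega
  have hcb : Nat.centralBinom n ≤ (2 * n) ^ ((2 * n + 1).primesBelow.card) := by
    have hpos : Nat.centralBinom n ≠ 0 := (Nat.centralBinom_pos n).ne'
    calc Nat.centralBinom n
        = ∏ p ∈ (Nat.centralBinom n).factorization.support,
            p ^ (Nat.centralBinom n).factorization p :=
          (Nat.factorization_prod_pow_eq_self hpos).symm
      _ ≤ ∏ p ∈ (Nat.centralBinom n).factorization.support, (2 * n) := by
          apply Finset.prod_le_prod'
          intro p hp
          exact Nat.pow_factorization_choose_le h2n
      _ = (2 * n) ^ (Nat.centralBinom n).factorization.support.card :=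
          Finset.prod_const _
      _ ≤ (2 * n) ^ ((2 * n + 1).primesBelow.card) := by
          apply Nat.pow_le_pow_right h2n
          apply Finset.card_le_card
          intro p hp
          rw [Nat.support_factorization] at hp
          rw [Nat.mem_primesBelow]
          refine ⟨?_, Nat.prime_of_mem_primeFactors hp⟩
          have he : 0 < (Nat.centralBinom n).factorization p :=
            (Nat.prime_of_mem_primeFactors hp).factorization_pos_of_dvd
              (Nat.centralBinom_pos n).ne' (Nat.dvd_of_mem_primeFactors hp)
          have : p ≤ p ^ (Nat.centralBinom n).factorization p :=
            Nat.le_self_pow he.ne' p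
          have h2 : p ^ (Nat.centralBinom n).factorization p ≤ 2 * n :=
            Nat.pow_factorization_choose_le h2n
          omega
  calc 4 ^ n ≤ 2 * n * Nat.centralBinom n :=
        Nat.four_pow_le_two_mul_self_mul_centralBinom n hn
    _ ≤ 2 * n * (2 * n) ^ ((2 * n + 1).primesBelow.card) :=
        Nat.mul_le_mul_left _ hcb
    _ = (2 * n) ^ ((2 * n + 1).primesBelow.card + 1) := by ring

private lemma aux_pow (j : ℕ) (h : 5 ≤ j) : 4 * (j + 1) ≤ 2 ^ j := by
  induction j, h using Nat.le_induction with
  | base => norm_num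
  | succ k hk ih =>
    rw [pow_succ]
    omega

private lemma log_bound (m : ℕ) (hm : 16 ≤ m) :
    2 * (Nat.log 2 m + 1) * (m + 1) < m ^ 2 := by
  rcases Nat.lt_or_ge m 32 with h32 | h32
  · have hlog : Nat.log 2 m = 4 :=
      Nat.log_eq_of_pow_le_of_lt_pow (by norm_num; omega) (by norm_num; omega)
    rw [hlog]
    nlinarith
  · have hlog5 : 5 ≤ Nat.log 2 m := by
      have := Nat.log_mono_right (b := 2) (show 32 ≤ m from h32)
      simpa [Nat.log_eq_of_pow_le_of_lt_pow (show 2^5 ≤ 32 by norm_num) (show 32 < 2^6 by norm_num)] using this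
    have h1 : 4 * (Nat.log 2 m + 1) ≤ 2 ^ (Nat.log 2 m) := aux_pow _ hlog5
    have h2 : 2 ^ (Nat.log 2 m) ≤ m := Nat.pow_log_le_self 2 (by omega)
    nlinarith

private lemma pow_contra (m : ℕ) (hm : 16 ≤ m) :
    (m ^ 2 + 1) ^ (m + 1) < 2 ^ (m ^ 2) := by
  set L := Nat.log 2 m + 1 with hL
  have h1 : m < 2 ^ L := Nat.lt_pow_succ_log_self (by norm_num) m
  have hsq : m ^ 2 + 1 ≤ 2 ^ (2 * L) := by
    have : m ^ 2 < (2 ^ L) ^ 2 := Nat.pow_lt_pow_left h1 two_ne_zero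
    calc m ^ 2 + 1 ≤ (2 ^ L) ^ 2 := by omega
      _ = 2 ^ (2 * L) := by rw [← pow_mul, mul_comm]
  calc (m ^ 2 + 1) ^ (m + 1) ≤ (2 ^ (2 * L)) ^ (m + 1) :=
        Nat.pow_le_pow_left hsq _
    _ = 2 ^ (2 * L * (m + 1)) := by rw [← pow_mul]
    _ < 2 ^ (m ^ 2) := Nat.pow_lt_pow_right (by norm_num) (log_bound m hm)

/-- Key lemma: there are at least `m + 1` primes `≤ m² + 1`. -/
private lemma key (m : ℕ) (hm : 2 ≤ m) : m + 1 ≤ (m ^ 2 + 2).primesBelow.card := by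
  rcases Nat.lt_or_ge m 16 with h16 | h16
  · -- small cases via checkpoints
    have c6 : 3 ≤ (6 : ℕ).primesBelow.card := by rw [pb_eq]; decide
    have c11 : 4 ≤ (11 : ℕ).primesBelow.card := by rw [pb_eq]; decide
    have c18 : 7 ≤ (18 : ℕ).primesBelow.card := by rw [pb_eq]; decide
    have c51 : 15 ≤ (51 : ℕ).primesBelow.card := by rw [pb_eq]; decide
    have c54 : 16 ≤ (54 : ℕ).primesBelow.card := by
      rw [pb_eq]
      decide
    rcases Nat.lt_or_ge m 3 with h | h
    · have : m = 2 := by omega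
      subst this
      exact c6
    rcases Nat.lt_or_ge m 4 with h4 | h4
    · have : m = 3 := by omega
      subst this
      exact c11
    rcases Nat.lt_or_ge m 7 with h7 | h7
    · have : 18 ≤ m ^ 2 + 2 := by nlinarith
      have := pb_mono this
      omega
    rcases Nat.lt_or_ge m 15 with h15 | h15
    · have : 51 ≤ m ^ 2 + 2 := by nlinarith
      have := pb_mono this
      omega
    · have : 54 ≤ m ^ 2 + 2 := by nlinarith
      have := pb_mono this
      omega
  · by_contra hcon
    push_neg at hcon
    set n := (m ^ 2 + 1) / 2 with hn
    have h2n : m ^ 2 ≤ 2 * n ∧ 2 * n ≤ m ^ 2 + 1 := by omega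
    have hnpos : 0 < n := by nlinarith [h2n.1]
    have hmono : (2 * n + 1).primesBelow.card ≤ (m ^ 2 + 2).primesBelow.card :=
      pb_mono (by omega)
    have hc : (2 * n + 1).primesBelow.card ≤ m := by omega
    have h1 : 2 ^ (m ^ 2) ≤ 4 ^ n := by
      calc 2 ^ (m ^ 2) ≤ 2 ^ (2 * n) := Nat.pow_le_pow_right (by norm_num) h2n.1
        _ = 4 ^ n := by rw [show (4:ℕ) = 2^2 by norm_num, ← pow_mul]
    have h2 : 4 ^ n ≤ (2 * n) ^ ((2 * n + 1).primesBelow.card + 1) := cheb n hnpos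
    have h3 : (2 * n) ^ ((2 * n + 1).primesBelow.card + 1) ≤ (m ^ 2 + 1) ^ (m + 1) := by
      have hA : (2 * n) ^ ((2 * n + 1).primesBelow.card + 1) ≤
          (m ^ 2 + 1) ^ ((2 * n + 1).primesBelow.card + 1) :=
        Nat.pow_le_pow_left (by omega) _
      have hB : (m ^ 2 + 1) ^ ((2 * n + 1).primesBelow.card + 1) ≤ (m ^ 2 + 1) ^ (m + 1) :=
        Nat.pow_le_pow_right (by nlinarith [h2n.1]) (by omega)
      exact hA.trans hB
    have h4 : (m ^ 2 + 1) ^ (m + 1) < 2 ^ (m ^ 2) := pow_contra m h16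
    omega

theorem primes_in_interval (r : ℝ) (hr : 2 ≤ r) :
    ⌈r⌉₊ ≤ {p : ℕ | p.Prime ∧ 1 ≤ (p : ℝ) ∧ (p : ℝ) ≤ r ^ 2 + 1}.ncard := by
  set c := ⌈r⌉₊ with hc
  have hrc : r ≤ c := Nat.le_ceil r
  have hc2 : 2 ≤ c := by
    have : (2 : ℝ) ≤ c := hr.trans hrc
    exact_mod_cast this
  set M := max (c - 1) 2 with hM
  have hM2 : 2 ≤ M := le_max_right _ _
  have hMr : (M : ℝ) ≤ r := by
    rcases max_cases (c - 1) 2 with ⟨h, hle⟩ | ⟨h, hlt⟩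
    · rw [hM, h]
      by_contra hcon
      push_neg at hcon
      have : c ≤ c - 1 := Nat.ceil_le.mpr hcon.le
      omega
    · rw [hM, h]
      exact_mod_cast hr
  have hcM : c ≤ M + 1 := by omega
  have hsub : ↑((M ^ 2 + 2).primesBelow) ⊆
      {p : ℕ | p.Prime ∧ 1 ≤ (p : ℝ) ∧ (p : ℝ) ≤ r ^ 2 + 1} := by
    intro p hp
    simp only [Finset.coe_sort_coe, Finset.mem_coe, Nat.mem_primesBelow] at hp
    obtain ⟨hlt, hprime⟩ := hp
    refine ⟨hprime, ?_, ?_⟩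
    · exact_mod_cast hprime.one_lt.le
    · have h1 : (p : ℝ) ≤ (M : ℝ) ^ 2 + 1 := by
        have : p ≤ M ^ 2 + 1 := by omega
        have := (Nat.cast_le (α := ℝ)).mpr this
        push_cast at this
        linarith
      have h2 : (M : ℝ) ^ 2 ≤ r ^ 2 := by
        have hM0 : (0 : ℝ) ≤ (M : ℝ) := Nat.cast_nonneg _
        nlinarith
      linarith
  have hfin : {p : ℕ | p.Prime ∧ 1 ≤ (p : ℝ) ∧ (p : ℝ) ≤ r ^ 2 + 1}.Finite := by
    apply Set.Finite.subset (Set.finite_Iic ⌊r ^ 2 + 1⌋₊)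
    intro p hp
    exact Nat.le_floor hp.2.2
  calc c ≤ M + 1 := hcM
    _ ≤ (M ^ 2 + 2).primesBelow.card := key M hM2
    _ = (↑((M ^ 2 + 2).primesBelow) : Set ℕ).ncard := (Set.ncard_coe_finset _).symm
    _ ≤ _ := Set.ncard_le_ncard hsub hfin
end

section
/- Let n ≥ 2, δ ≥ 1, and over a field K define f1 := x1, fi := xi − x_{i−1}^δ for i = 2,…,n, and f_{n+1} := x_n^δ in K[x1,…,xn]. Then trdeg{f1,…,f_{n+1}} = n and every nonzero polynomial F ∈ K[y1,…,y_{n+1}] with F(f1,…,f_{n+1}) = 0 has total degree at least δ^n. -/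
open MvPolynomial

lemma aux_homog_ne_zero {σ R : Type*} [CommSemiring R] (p : MvPolynomial σ R) (hp : p ≠ 0) :
    homogeneousComponent p.totalDegree p ≠ 0 := by
  obtain ⟨d, hd, hdeg⟩ := Finset.exists_mem_eq_sup p.support
    (support_nonempty.mpr hp) (fun m => m.sum fun _ e => e)
  intro h0
  have hc : coeff d (homogeneousComponent p.totalDegree p) = coeff d p := by
    rw [coeff_homogeneousComponent, if_pos]
    rw [MvPolynomial.totalDegree, hdeg]
    simp [Finsupp.degree, Finsupp.sum]
    rfl
  rw [h0] at hc
  exact (mem_support_iff.mp hd) (by simpa using hc.symm)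

lemma aux_totalDegree_le_mul {σ R : Type*} [CommRing R] [IsDomain R]
    (p q : MvPolynomial σ R) (hq : q ≠ 0) :
    p.totalDegree ≤ (p * q).totalDegree := by
  by_cases hp : p = 0
  · simp [hp]
  set a := p.totalDegree with ha
  set b := q.totalDegree with hb
  have key : homogeneousComponent (a + b) (p * q) =
      homogeneousComponent a p * homogeneousComponent b q := by
    conv_lhs => rw [← sum_homogeneousComponent p, ← sum_homogeneousComponent q]
    rw [Finset.sum_mul_sum, ← ha, ← hb, map_sum]
    have hterm : ∀ i ∈ Finset.range (a+1), ∀ j ∈ Finset.range (b+1),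
        homogeneousComponent (a + b) (homogeneousComponent i p * homogeneousComponent j q)
          = if a + b = i + j then homogeneousComponent i p * homogeneousComponent j q else 0 := by
      intro i _ j _
      exact homogeneousComponent_of_mem
        ((mem_homogeneousSubmodule _ _).mpr
          ((homogeneousComponent_isHomogeneous i p).mul (homogeneousComponent_isHomogeneous j q)))
    rw [Finset.sum_congr rfl (fun i hi => map_sum _ _ _)]
    rw [Finset.sum_congr rfl (fun i hi => Finset.sum_congr rfl (fun j hj => hterm i hi j hj))]
    rw [Finset.sum_eq_single a]
    · rw [Finset.sum_eq_single b]
      · simp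
      · intro j hj hne
        rw [if_neg]
        simp only [Finset.mem_range] at hj
        omega
      · intro h; exact absurd (Finset.self_mem_range_succ b) h
    · intro i hi hne
      apply Finset.sum_eq_zero
      intro j hj
      rw [if_neg]
      simp only [Finset.mem_range] at hi hj
      omega
    · intro h; exact absurd (Finset.self_mem_range_succ a) h
  have hne : homogeneousComponent (a + b) (p * q) ≠ 0 := by
    rw [key]
    exact mul_ne_zero (aux_homog_ne_zero p hp) (aux_homog_ne_zero q hq)
  have : ¬ (p * q).totalDegree < a + b := fun hlt => hne (homogeneousComponent_eq_zero _ _ hlt)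
  omega

lemma aux_natDegree_aeval_le {K : Type*} [CommRing K] {m : ℕ} (g : Fin m → Polynomial K)
    (hg : ∀ j, (g j).natDegree ≤ 1) (F : MvPolynomial (Fin m) K) :
    (MvPolynomial.aeval g F).natDegree ≤ F.totalDegree := by
  rw [MvPolynomial.aeval_def, eval₂_eq]
  apply Polynomial.natDegree_sum_le_of_forall_le
  intro d hd
  refine (Polynomial.natDegree_mul_le).trans ?_
  have h1 : (algebraMap K (Polynomial K) (coeff d F)).natDegree = 0 :=
    Polynomial.natDegree_C _
  rw [h1, zero_add]
  refine (Polynomial.natDegree_prod_le _ _).trans ?_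
  refine le_trans ?_ (MvPolynomial.le_totalDegree hd)
  rw [Finsupp.sum]
  apply Finset.sum_le_sum
  intro i _
  calc (g i ^ d i).natDegree ≤ d i * (g i).natDegree := Polynomial.natDegree_pow_le
    _ ≤ d i * 1 := Nat.mul_le_mul_left _ (hg i)
    _ = d i := Nat.mul_one _

open MvPolynomial
open Fin.NatCast

noncomputable def pp (K : Type*) [CommRing K] (n : ℕ) [NeZero n] (δ : ℕ) :
    ℕ → MvPolynomial (Fin n) K
  | 0 => MvPolynomial.X 0
  | i + 1 => MvPolynomial.X ((i + 1 : ℕ) : Fin n) + pp K n δ i ^ δ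

theorem annihilating_degree_bound_tight (K : Type*) [Field K] (n δ : ℕ)
    (hn : 2 ≤ n) (hδ : 1 ≤ δ) (f : Fin (n + 1) → MvPolynomial (Fin n) K)
    (h1 : f ⟨0, by omega⟩ = MvPolynomial.X ⟨0, by omega⟩)
    (h2 : ∀ i : ℕ, ∀ _ : 1 ≤ i, ∀ hi2 : i < n,
      f ⟨i, by omega⟩ =
        MvPolynomial.X ⟨i, by omega⟩ - (MvPolynomial.X ⟨i - 1, by omega⟩) ^ δ)
    (h3 : f ⟨n, by omega⟩ = (MvPolynomial.X ⟨n - 1, by omega⟩) ^ δ) :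
    trdeg K f = n ∧
    ∀ F : MvPolynomial (Fin (n + 1)) K, F ≠ 0 → MvPolynomial.aeval f F = 0 →
      δ ^ n ≤ F.totalDegree := by
  haveI : NeZero n := ⟨by omega⟩
  set f' : Fin n → MvPolynomial (Fin n) K := fun i => f i.castSucc with hf'def
  have hf' : ∀ (j : Fin n), f' j = f ⟨j.val, by omega⟩ := fun j => rfl
  -- L1 : evaluating pp at f' gives the variables back
  have L1 : ∀ i, ∀ hi : i < n,
      MvPolynomial.aeval f' (pp K n δ i) = MvPolynomial.X (⟨i, hi⟩ : Fin n) := by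
    intro i
    induction i with
    | zero =>
      intro hi
      rw [pp, aeval_X, hf']
      have e0 : (⟨(((0 : Fin n)) : ℕ), by omega⟩ : Fin (n+1)) = ⟨0, by omega⟩ := by
        ext; simp
      rw [e0, h1]
    | succ i ih =>
      intro hi
      rw [pp, map_add, map_pow, aeval_X, ih (by omega), hf']
      have hv : (((i + 1 : ℕ) : Fin n) : ℕ) = i + 1 := Fin.val_cast_of_lt hi
      have e1 : (⟨(((i + 1 : ℕ) : Fin n) : ℕ), by omega⟩ : Fin (n+1)) = ⟨i + 1, by omega⟩ := by
        ext; exact hv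
      rw [e1, h2 (i + 1) (by omega) (by omega)]
      have e2 : (⟨i + 1 - 1, by omega⟩ : Fin n) = ⟨i, by omega⟩ := by
        simp only [Fin.mk.injEq]; omega
      rw [e2, sub_add_cancel]
  -- β is a left inverse of α := aeval f'
  set β := MvPolynomial.aeval (R := K) (fun j : Fin n => pp K n δ j.val) with hβ
  have hba : β.comp (MvPolynomial.aeval f') = AlgHom.id K _ := by
    apply MvPolynomial.algHom_ext
    intro j
    rw [AlgHom.comp_apply, aeval_X, AlgHom.id_apply]
    rcases j with ⟨jv, hj⟩
    match jv with
    | 0 =>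
      rw [hf', h1]
      rw [hβ, aeval_X]
      rfl
    | k + 1 =>
      rw [hf', h2 (k + 1) (by omega) (by omega), map_sub, map_pow, aeval_X, aeval_X]
      show pp K n δ (k+1) - pp K n δ (k+1-1) ^ δ = _
      rw [pp]
      have : k + 1 - 1 = k := rfl
      rw [this, add_sub_cancel_right]
      congr 1
      ext
      exact Fin.val_cast_of_lt hj
  have hαinj : Function.Injective (MvPolynomial.aeval (R := K) f') := by
    intro x y hxy
    have hx := congrArg β hxy
    rwa [← AlgHom.comp_apply, ← AlgHom.comp_apply, hba, AlgHom.id_apply, AlgHom.id_apply] at hx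
  have hindep' : AlgebraicIndependent K f' :=
    algebraicIndependent_iff_injective_aeval.mpr hαinj
  -- P and its properties
  set P : MvPolynomial (Fin n) K := pp K n δ (n - 1) ^ δ with hP
  have hαP : MvPolynomial.aeval f' P = f (Fin.last n) := by
    rw [hP, map_pow, L1 (n - 1) (by omega), ← h3]
    rfl
  set A : MvPolynomial (Fin (n + 1)) K :=
    MvPolynomial.X (Fin.last n) - rename Fin.castSucc P with hA
  -- the univariate substitution φ
  set h0 : Fin n → Polynomial K := fun i => if (i : ℕ) = 0 then Polynomial.X else 0 with hh0
  set gφ : Fin (n + 1) → Polynomial K := fun j => if (j : ℕ) = 0 then Polynomial.X else 0 with hgφ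
  have hgφdeg : ∀ j, (gφ j).natDegree ≤ 1 := by
    intro j
    rw [hgφ]
    dsimp only
    split <;> simp
  have Lφ : ∀ i, i < n → MvPolynomial.aeval h0 (pp K n δ i) = Polynomial.X ^ δ ^ i := by
    intro i
    induction i with
    | zero =>
      intro _
      rw [pp, aeval_X, hh0]
      simp
    | succ i ih =>
      intro hi
      rw [pp, map_add, map_pow, aeval_X, ih (by omega), hh0]
      dsimp only
      rw [if_neg (by rw [Fin.val_cast_of_lt hi]; omega), ← pow_mul, ← pow_succ, zero_add]
  have hφA : MvPolynomial.aeval gφ A = -(Polynomial.X ^ δ ^ n) := by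
    rw [hA, map_sub, aeval_X, aeval_rename]
    have hc : (gφ ∘ Fin.castSucc) = h0 := by
      funext i
      rw [hgφ, hh0]
      simp [Fin.coe_castSucc]
    rw [hc, hP, map_pow, Lφ (n - 1) (by omega), ← pow_mul, ← pow_succ]
    have hn1 : n - 1 + 1 = n := by omega
    rw [hn1, hgφ]
    dsimp only
    rw [if_neg (by simp [Fin.val_last]; omega), zero_sub]
  have hXpow_ne : (Polynomial.X : Polynomial K) ^ δ ^ n ≠ 0 :=
    pow_ne_zero _ Polynomial.X_ne_zero
  have hAdeg : δ ^ n ≤ A.totalDegree := by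
    have hle := aux_natDegree_aeval_le gφ hgφdeg A
    rw [hφA, Polynomial.natDegree_neg, Polynomial.natDegree_X_pow] at hle
    exact hle
  have hA0 : A ≠ 0 := by
    intro h
    rw [h, map_zero] at hφA
    exact hXpow_ne (neg_eq_zero.mp hφA.symm)
  have hfA : MvPolynomial.aeval f A = 0 := by
    rw [hA, map_sub, aeval_X, aeval_rename]
    have : (f ∘ Fin.castSucc) = f' := rfl
    rw [this, hαP, sub_self]
  have hdep : ¬ AlgebraicIndependent K f := fun h => hA0 (h.eq_zero_of_aeval_eq_zero A hfA)
  constructor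
  · -- trdeg = n
    have hub : ∀ r ∈ {r | ∃ s : Finset (Fin (n+1)), s.card = r ∧
        AlgebraicIndependent K (fun i : ↥s => f i.1)}, r ≤ n := by
      rintro r ⟨s, hcard, hind⟩
      by_contra hlt
      push_neg at hlt
      have hle : r ≤ n + 1 := by
        rw [← hcard]
        simpa using Finset.card_le_univ s
      have hr : r = n + 1 := by omega
      have hs : s = Finset.univ := by
        apply Finset.eq_univ_of_card
        simp [hcard, hr]
      subst hs
      apply hdep
      have := hind.comp (fun x : Fin (n+1) => (⟨x, Finset.mem_univ x⟩ : ↥(Finset.univ : Finset (Fin (n+1)))))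
        (fun a b hab => congrArg Subtype.val hab)
      exact this
    have hmem : n ∈ {r | ∃ s : Finset (Fin (n+1)), s.card = r ∧
        AlgebraicIndependent K (fun i : ↥s => f i.1)} := by
      refine ⟨Finset.map ⟨Fin.castSucc, Fin.castSucc_injective n⟩ Finset.univ, by simp, ?_⟩
      set s := Finset.map ⟨Fin.castSucc, Fin.castSucc_injective n⟩ Finset.univ with hsdef
      have hval : ∀ j : ↥s, (j.1 : ℕ) < n := by
        rintro ⟨j, hj⟩
        rw [hsdef, Finset.mem_map] at hj
        obtain ⟨a, -, ha⟩ := hj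
        have : j = Fin.castSucc a := ha.symm
        subst this
        simpa using a.isLt
      have hcomp : (fun i : ↥s => f i.1) = f' ∘ (fun j : ↥s => (⟨(j.1 : ℕ), hval j⟩ : Fin n)) := by
        funext j
        show f j.1 = f (Fin.castSucc ⟨(j.1 : ℕ), hval j⟩)
        exact congrArg f (Fin.ext rfl)
      rw [hcomp]
      refine hindep'.comp _ (fun a b hab => ?_)
      have h' : (a.1 : ℕ) = (b.1 : ℕ) := by
        have := congrArg Fin.val hab
        simpa using this
      exact Subtype.ext (Fin.ext h')
    unfold trdeg
    apply le_antisymm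
    · exact csSup_le ⟨n, hmem⟩ hub
    · exact le_csSup ⟨n, fun r hr => hub r hr⟩ hmem
  · -- degree bound
    intro F hF hFf
    set e := (MvPolynomial.renameEquiv K (finRotate (n+1))).trans (MvPolynomial.finSuccEquiv K n)
      with he
    have heX : ∀ j : Fin (n+1), e (MvPolynomial.X j)
        = MvPolynomial.finSuccEquiv K n (MvPolynomial.X (finRotate (n+1) j)) := by
      intro j
      rw [he, AlgEquiv.trans_apply, renameEquiv_apply, rename_X]
    have helast : e (MvPolynomial.X (Fin.last n)) = Polynomial.X := by
      rw [heX, finRotate_last, finSuccEquiv_X_zero]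
    have hecast : ∀ i : Fin n, e (MvPolynomial.X i.castSucc)
        = Polynomial.C (MvPolynomial.X i) := by
      intro i
      rw [heX, finRotate_succ_apply, Fin.coeSucc_eq_succ, finSuccEquiv_X_succ]
    have heC : ∀ p : MvPolynomial (Fin n) K,
        e (rename Fin.castSucc p) = Polynomial.C p := by
      have hhom : (e.toAlgHom.comp (rename (R := K) Fin.castSucc)) =
          (IsScalarTower.toAlgHom K (MvPolynomial (Fin n) K)
            (Polynomial (MvPolynomial (Fin n) K))) := by
        apply MvPolynomial.algHom_ext
        intro i
        rw [AlgHom.comp_apply, rename_X]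
        show e (MvPolynomial.X i.castSucc) = _
        rw [hecast i, IsScalarTower.toAlgHom_apply, Polynomial.algebraMap_eq]
      intro p
      have := congrArg (fun φ => φ p) hhom
      simpa [Polynomial.algebraMap_eq] using this
    -- aeval f F = α (aeval P (e F))
    have hΨ : MvPolynomial.aeval f F =
        MvPolynomial.aeval f' (Polynomial.aeval P (e F)) := by
      have hhom : (MvPolynomial.aeval (R := K) f) =
          ((MvPolynomial.aeval (R := K) f').comp
            (((Polynomial.aeval (R := MvPolynomial (Fin n) K) P).restrictScalars K).comp
              e.toAlgHom)) := by
        apply MvPolynomial.algHom_ext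
        intro j
        rw [aeval_X, AlgHom.comp_apply, AlgHom.comp_apply]
        induction j using Fin.lastCases with
        | last =>
          show f (Fin.last n) = MvPolynomial.aeval f'
            ((Polynomial.aeval P).restrictScalars K (e (MvPolynomial.X (Fin.last n))))
          rw [helast]
          show f (Fin.last n) = MvPolynomial.aeval f' (Polynomial.aeval P Polynomial.X)
          rw [Polynomial.aeval_X, hαP]
        | cast i =>
          show f i.castSucc = MvPolynomial.aeval f'
            ((Polynomial.aeval P).restrictScalars K (e (MvPolynomial.X i.castSucc)))
          rw [hecast i]
          show f i.castSucc = MvPolynomial.aeval f' (Polynomial.aeval P (Polynomial.C (MvPolynomial.X i)))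
          rw [Polynomial.aeval_C]
          simp [hf'def]
      rw [hhom]
      rfl
    have hroot : Polynomial.IsRoot (e F) P := by
      have h0 : MvPolynomial.aeval f' (Polynomial.aeval P (e F)) = 0 := by
        rw [← hΨ, hFf]
      have h1' : Polynomial.aeval P (e F) = 0 := by
        apply hαinj
        rw [h0, map_zero]
      rwa [Polynomial.IsRoot, ← Polynomial.coe_aeval_eq_eval]
    obtain ⟨Q, hQ⟩ := Polynomial.dvd_iff_isRoot.mpr hroot
    have hQ0 : Q ≠ 0 := by
      rintro rfl
      rw [mul_zero] at hQ
      apply hF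
      have := congrArg e.symm hQ
      rwa [AlgEquiv.symm_apply_apply, map_zero] at this
    have hFfact : F = A * e.symm Q := by
      apply e.injective
      rw [map_mul]
      have hA' : e A = Polynomial.X - Polynomial.C P := by
        rw [hA, map_sub, helast, heC]
      rw [hA', AlgEquiv.apply_symm_apply, hQ]
    have hQ0' : e.symm Q ≠ 0 := by
      intro h
      apply hQ0
      have := congrArg e h
      rwa [AlgEquiv.apply_symm_apply, map_zero] at this
    calc δ ^ n ≤ A.totalDegree := hAdeg
      _ ≤ (A * e.symm Q).totalDegree := aux_totalDegree_le_mul A _ hQ0'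
      _ = F.totalDegree := by rw [← hFfact]
end

section
/- Let s ≤ n be positive integers. For an index set I = {j1 < … < js} ⊆ {1,…,n}, let h_I := det of the s×s matrix whose (a,b) entry is t^{j_a·(n+1)^b} ∈ K[t]. Then h_I is nonzero, deg(h_I) = j1·(n+1) + j2·(n+1)² + … + js·(n+1)^s < (n+1)^{s+1}, and for distinct index sets I ≠ I' of size s we have deg(h_I) ≠ deg(h_{I'}). -/
/-- The determinant of the Vandermonde-like matrix of monomials
`t ^ (j a * (n+1) ^ (b+1))`. -/
noncomputable def vdmDet (K : Type*) [Field K] (n s : ℕ) (j : Fin s → ℕ) : Polynomial K :=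
  (Matrix.of fun a b : Fin s =>
    (Polynomial.X : Polynomial K) ^ (j a * (n + 1) ^ ((b : ℕ) + 1))).det

/-- Geometric sum identity in ℕ. -/
lemma vdm_geom (n : ℕ) : ∀ s : ℕ, n * ∑ i ∈ Finset.range s, (n + 1) ^ i + 1 = (n + 1) ^ s := by
  intro s
  induction s with
  | zero => simp
  | succ s ih =>
    rw [Finset.sum_range_succ, Nat.mul_add, pow_succ]
    nlinarith [ih]

/-- Uniqueness of base-(n+1) digits. -/
lemma vdm_digits_unique (n : ℕ) : ∀ (s : ℕ) (f g : Fin s → ℕ),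
    (∀ a, f a ≤ n) → (∀ a, g a ≤ n) →
    (∑ a : Fin s, f a * (n + 1) ^ (a : ℕ)) = (∑ a : Fin s, g a * (n + 1) ^ (a : ℕ)) →
    f = g := by
  intro s
  induction s with
  | zero => intro f g _ _ _; funext a; exact absurd a.2 (by omega)
  | succ s ih =>
    intro f g hf hg h
    rw [Fin.sum_univ_succ, Fin.sum_univ_succ] at h
    simp only [Fin.val_zero, pow_zero, Nat.mul_one, Fin.val_succ] at h
    have key : ∀ h' : Fin s → ℕ, (∑ a : Fin s, h' (a) * (n + 1) ^ ((a : ℕ) + 1))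
        = (n + 1) * ∑ a : Fin s, h' a * (n + 1) ^ (a : ℕ) := by
      intro h'
      rw [Finset.mul_sum]
      exact Finset.sum_congr rfl fun a _ => by ring
    rw [key, key] at h
    have h0 : f 0 = g 0 := by
      have := congrArg (· % (n + 1)) h
      simpa [Nat.add_mul_mod_self_left, Nat.mod_eq_of_lt (Nat.lt_succ_of_le (hf 0)),
        Nat.mod_eq_of_lt (Nat.lt_succ_of_le (hg 0))] using this
    have htail : (fun a : Fin s => f a.succ) = fun a : Fin s => g a.succ := by
      apply ih _ _ (fun a => hf a.succ) (fun a => hg a.succ)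
      have : (n + 1) * (∑ a : Fin s, f a.succ * (n + 1) ^ (a : ℕ))
          = (n + 1) * (∑ a : Fin s, g a.succ * (n + 1) ^ (a : ℕ)) := by omega
      exact Nat.eq_of_mul_eq_mul_left (by omega) this
    funext a
    refine Fin.cases h0 (fun i => ?_) a
    exact congrFun htail i

lemma vdm_main (K : Type*) [Field K] (n s : ℕ) (hn : 0 < n)
    (j : Fin s → ℕ) (hj : StrictMono j) :
    vdmDet K n s j ≠ 0 ∧
    (vdmDet K n s j).natDegree = ∑ a : Fin s, j a * (n + 1) ^ ((a : ℕ) + 1) := by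
  classical
  have hn1 : 1 < n + 1 := by omega
  have hwmono : StrictMono (fun b : Fin s => (n + 1) ^ ((b : ℕ) + 1)) := fun a b hab =>
    Nat.pow_lt_pow_right hn1 (by simpa using hab)
  have hmono : Monovary j (fun b : Fin s => (n + 1) ^ ((b : ℕ) + 1)) := fun a b hab =>
    (hj.le_iff_le).2 (hwmono.lt_iff_lt.1 hab).le
  have hle : ∀ σ : Equiv.Perm (Fin s),
      (∑ i : Fin s, j (σ i) * (n + 1) ^ ((i : ℕ) + 1))
        ≤ ∑ i : Fin s, j i * (n + 1) ^ ((i : ℕ) + 1) := by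
    intro σ
    have := hmono.sum_comp_perm_smul_le_sum_smul (σ := σ)
    simpa [smul_eq_mul] using this
  have hlt : ∀ σ : Equiv.Perm (Fin s), σ ≠ 1 →
      (∑ i : Fin s, j (σ i) * (n + 1) ^ ((i : ℕ) + 1))
        < ∑ i : Fin s, j i * (n + 1) ^ ((i : ℕ) + 1) := by
    intro σ hσ
    have hnmono : ¬ Monovary (j ∘ σ) (fun b : Fin s => (n + 1) ^ ((b : ℕ) + 1)) := by
      intro hmon
      apply hσ
      have hsm : StrictMono (⇑σ) := by
        intro a b hab
        have h1 : j (σ a) ≤ j (σ b) := hmon (hwmono hab)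
        have h2 : σ a ≤ σ b := hj.le_iff_le.1 h1
        exact lt_of_le_of_ne h2 (fun he => absurd (σ.injective he) (ne_of_lt hab))
      have h := @StrictMono.range_inj (Fin s) (Fin s) Fin.instLinearOrder inferInstance
        Finite.to_wellFoundedLT (⇑σ) id hsm strictMono_id
      have : ⇑σ = id := h.1 (by
        rw [Set.range_id]; exact Set.range_eq_univ.2 σ.surjective)
      exact Equiv.Perm.ext fun x => congrFun this x
    have := (hmono.sum_comp_perm_smul_lt_sum_smul_iff (σ := σ)).2 hnmono
    simpa [smul_eq_mul] using this
  have hdet : vdmDet K n s j = ∑ σ : Equiv.Perm (Fin s),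
      (((Equiv.Perm.sign σ : ℤ) : Polynomial K)) * (Polynomial.X : Polynomial K)
        ^ (∑ i : Fin s, j (σ i) * (n + 1) ^ ((i : ℕ) + 1)) := by
    rw [vdmDet, Matrix.det_apply']
    refine Finset.sum_congr rfl fun σ _ => ?_
    congr 1
    simp only [Matrix.of_apply]
    rw [Finset.prod_pow_eq_pow_sum]
  set Dtop : ℕ := ∑ i : Fin s, j i * (n + 1) ^ ((i : ℕ) + 1) with hDtop
  have hcoeff : (vdmDet K n s j).coeff Dtop = 1 := by
    rw [hdet, Polynomial.finset_sum_coeff]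
    rw [Finset.sum_eq_single (1 : Equiv.Perm (Fin s))]
    · simp [Polynomial.coeff_X_pow, hDtop]
    · intro σ _ hσ
      simp [Polynomial.coeff_X_pow, Nat.ne_of_lt (hlt σ hσ),
        Ne.symm (Nat.ne_of_lt (hlt σ hσ))]
    · intro h; exact absurd (Finset.mem_univ _) h
  have hne : vdmDet K n s j ≠ 0 := fun h => by simp [h] at hcoeff
  have hdegle : (vdmDet K n s j).natDegree ≤ Dtop := by
    rw [hdet]
    refine Polynomial.natDegree_sum_le_of_forall_le _ _ fun σ _ => ?_
    refine le_trans (Polynomial.natDegree_mul_le) ?_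
    rw [Polynomial.natDegree_intCast, zero_add]
    exact le_trans (Polynomial.natDegree_X_pow_le _) (hle σ)
  have hdegge : Dtop ≤ (vdmDet K n s j).natDegree :=
    Polynomial.le_natDegree_of_ne_zero (by rw [hcoeff]; exact one_ne_zero)
  exact ⟨hne, le_antisymm hdegle hdegge⟩

theorem vandermonde_monomial_det (K : Type*) [Field K] (n s : ℕ)
    (hs : 0 < s) (hsn : s ≤ n) (j j' : Fin s → ℕ)
    (hj : StrictMono j) (hj' : StrictMono j')
    (hj1 : ∀ a, 1 ≤ j a) (hjn : ∀ a, j a ≤ n)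
    (hj1' : ∀ a, 1 ≤ j' a) (hjn' : ∀ a, j' a ≤ n) :
    vdmDet K n s j ≠ 0 ∧
    (vdmDet K n s j).natDegree = ∑ a : Fin s, j a * (n + 1) ^ ((a : ℕ) + 1) ∧
    (vdmDet K n s j).natDegree < (n + 1) ^ (s + 1) ∧
    (j ≠ j' → (vdmDet K n s j).natDegree ≠ (vdmDet K n s j').natDegree) := by
  have hn : 0 < n := lt_of_lt_of_le hs hsn
  obtain ⟨h1, h2⟩ := vdm_main K n s hn j hj
  obtain ⟨h1', h2'⟩ := vdm_main K n s hn j' hj'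
  have factor : ∀ f : Fin s → ℕ, (∑ a : Fin s, f a * (n + 1) ^ ((a : ℕ) + 1))
      = (n + 1) * ∑ a : Fin s, f a * (n + 1) ^ (a : ℕ) := by
    intro f
    rw [Finset.mul_sum]
    exact Finset.sum_congr rfl fun a _ => by ring
  refine ⟨h1, h2, ?_, ?_⟩
  · rw [h2, factor]
    have hsum : (∑ a : Fin s, j a * (n + 1) ^ (a : ℕ)) < (n + 1) ^ s := by
      have hle : (∑ a : Fin s, j a * (n + 1) ^ (a : ℕ))
          ≤ ∑ a : Fin s, n * (n + 1) ^ (a : ℕ) :=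
        Finset.sum_le_sum fun a _ => Nat.mul_le_mul_right _ (hjn a)
      have heq : (∑ a : Fin s, n * (n + 1) ^ (a : ℕ))
          = n * ∑ i ∈ Finset.range s, (n + 1) ^ i := by
        rw [Finset.mul_sum, Fin.sum_univ_eq_sum_range (fun i => n * (n + 1) ^ i)]
      have hg := vdm_geom n s
      omega
    calc (n + 1) * ∑ a : Fin s, j a * (n + 1) ^ (a : ℕ)
        < (n + 1) * (n + 1) ^ s := by exact Nat.mul_lt_mul_of_le_of_lt le_rfl hsum (by omega)
      _ = (n + 1) ^ (s + 1) := by ring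
  · intro hne heq
    apply hne
    rw [h2, h2', factor, factor] at heq
    exact vdm_digits_unique n s j j' hjn hjn'
      (Nat.eq_of_mul_eq_mul_left (by omega) heq)
end
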